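/- arXiv:1201.1521 — 4 statements merged into one kernel-verified Lean document; each statement's English description precedes it below -/
import Mathlib

section
/- Let M be the channel with input alphabet {1,2,3,4} and output alphabet {1,…,6} whose conditional probability rows are (1/3,0,1/3,0,1/3,0), (1/3,0,0,1/3,0,1/3), (0,1/3,1/3,0,0,1/3), (0,1/3,0,1/3,1/3,0). Then for any orthogonal projections P_1, …, P_6 on ℂ² (Hermitian with P_y² = P_y), the radius of the set { Σ_{y=1}^6 M(y|x)·P_y : x = 1,2,3,4 } is at most 1/6 + 1/(3√2). -/
open scoped Matrix Kronecker BigOperators Matrix.Norms.L2Operator ComplexOrder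
open Matrix Finset

noncomputable section

/-- A classical channel: `N x y` is the probability of output `y` given input `x`. -/
def IsChannel {X Y : Type*} [Fintype Y] (N : X → Y → ℝ) : Prop :=
  (∀ x y, 0 ≤ N x y) ∧ ∀ x, ∑ y, N x y = 1

/-- The unassisted one-shot success probability of a channel. -/
def Succ {X Y : Type*} [Fintype X] [Fintype Y] [Nonempty X]
    (N : X → Y → ℝ) : ℝ :=
  ⨆ z : X × X × (Y → Bool),
    (1 / 2) * (∑ y, if z.2.2 y = false then N z.1 y else 0) +
      (1 / 2) * (∑ y, if z.2.2 y = true then N z.2.1 y else 0)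

/-- A two-part input-output correlation: `D r s p q` is the probability of
outputs `(p, q)` given inputs `(r, s)`. -/
def IsCorrelation {R S P Q : Type*} [Fintype P] [Fintype Q]
    (D : R → S → P → Q → ℝ) : Prop :=
  (∀ r s p q, 0 ≤ D r s p q) ∧ ∀ r s, ∑ p, ∑ q, D r s p q = 1

/-- The non-signaling condition for a two-part correlation. -/
def NonSignaling {R S P Q : Type*} [Fintype P] [Fintype Q]
    (D : R → S → P → Q → ℝ) : Prop :=
  (∀ r p s s', ∑ q, D r s p q = ∑ q, D r s' p q) ∧
    ∀ s q r r', ∑ p, D r s p q = ∑ p, D r' s p q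

/-- `SuccD N D` : the optimal success probability for transmitting one bit
across the channel `N` with the assistance of the correlation `D`, i.e. the
maximum over deterministic protocols `(e, f, g, h)`. -/
def SuccD {X Y R S P Q : Type*} [Fintype X] [Fintype Y] [Fintype R] [Fintype S]
    [Fintype P] [Fintype Q] [DecidableEq P] [DecidableEq Q] [DecidableEq Y]
    [Nonempty X] [Nonempty R] [Nonempty S]
    (N : X → Y → ℝ) (D : R → S → P → Q → ℝ) : ℝ :=
  ⨆ π : (Bool → R) × (Bool → P → X) × (Y → S) × (Y → Q → Bool),
    (1 / 2) * ∑ a : Bool, ∑ p, ∑ y, ∑ q,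
      D (π.1 a) (π.2.2.1 y) p q * N (π.2.1 a p) y *
        (if π.2.2.2 y q = a then 1 else 0)

/-- The non-signaling assisted one-shot success probability: the supremum of
`SuccD N D` over all non-signaling correlations `D` (over all finite alphabets). -/
def SuccNS {X Y : Type*} [Fintype X] [Fintype Y] [DecidableEq Y] [Nonempty X]
    (N : X → Y → ℝ) : ℝ :=
  sSup { v : ℝ | ∃ (nR nS nP nQ : ℕ)
    (D : Fin (nR + 1) → Fin (nS + 1) → Fin nP → Fin nQ → ℝ),
    IsCorrelation D ∧ NonSignaling D ∧ v = SuccD N D }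

/-- Local-deterministic correlations. -/
def IsLocalDet {R S P Q : Type*} [DecidableEq P] [DecidableEq Q]
    (D : R → S → P → Q → ℝ) : Prop :=
  ∃ (φ : R → P) (ψ : S → Q), ∀ r s p q,
    D r s p q = (if p = φ r then 1 else 0) * (if q = ψ s then 1 else 0)

/-- Local correlations: finite convex combinations of local-deterministic ones. -/
def IsLocal {R S P Q : Type*} [DecidableEq P] [DecidableEq Q]
    (D : R → S → P → Q → ℝ) : Prop :=
  ∃ (n : ℕ) (w : Fin n → ℝ) (L : Fin n → R → S → P → Q → ℝ),
    (∀ i, 0 ≤ w i) ∧ (∑ i, w i = 1) ∧ (∀ i, IsLocalDet (L i)) ∧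
      ∀ r s p q, D r s p q = ∑ i, w i * L i r s p q

/-- The local fraction of a correlation. -/
def locFrac {R S P Q : Type*} [Fintype P] [Fintype Q] [DecidableEq P] [DecidableEq Q]
    (D : R → S → P → Q → ℝ) : ℝ :=
  sSup { α : ℝ | 0 ≤ α ∧ α ≤ 1 ∧ ∃ L F : R → S → P → Q → ℝ,
    IsLocal L ∧ IsCorrelation F ∧ NonSignaling F ∧
      ∀ r s p q, D r s p q = α * L r s p q + (1 - α) * F r s p q }

/-- Binary quantum correlations: all four alphabets are `Bool`, and the
correlation arises from local POVM measurements on a shared bipartite state. -/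
def IsBinaryQuantum (D : Bool → Bool → Bool → Bool → ℝ) : Prop :=
  ∃ (nA nB : ℕ)
    (Λ : Matrix (Fin (nA + 1) × Fin (nB + 1)) (Fin (nA + 1) × Fin (nB + 1)) ℂ)
    (A : Bool → Bool → Matrix (Fin (nA + 1)) (Fin (nA + 1)) ℂ)
    (B : Bool → Bool → Matrix (Fin (nB + 1)) (Fin (nB + 1)) ℂ),
    Λ.PosSemidef ∧ Λ.trace = 1 ∧
    (∀ r p, (A r p).PosSemidef) ∧ (∀ r, A r false + A r true = 1) ∧
    (∀ s q, (B s q).PosSemidef) ∧ (∀ s, B s false + B s true = 1) ∧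
    ∀ r s p q, (D r s p q : ℂ) = ((A r p ⊗ₖ B s q) * Λ).trace

/-- The binary-quantum assisted one-shot success probability. -/
def SuccQb {X Y : Type*} [Fintype X] [Fintype Y] [DecidableEq Y] [Nonempty X]
    (N : X → Y → ℝ) : ℝ :=
  sSup { v : ℝ | ∃ D : Bool → Bool → Bool → Bool → ℝ,
    IsBinaryQuantum D ∧ v = SuccD N D }

/-- The radius of a finite family of operators on `ℂ^n`, with respect to the
`ℓ²` operator norm: the minimum over Hermitian `C` of `max_i ‖H i − C‖`. -/
def matRad {n : ℕ} {I : Type*} [Fintype I] [Nonempty I]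
    (H : I → Matrix (Fin n) (Fin n) ℂ) : ℝ :=
  ⨅ C : { C : Matrix (Fin n) (Fin n) ℂ // C.IsHermitian }, ⨆ i, ‖H i - C.1‖

/-- The `n`-dimensional entanglement-assisted one-shot success probability. -/
def SuccQn {X Y : Type*} [Fintype X] [Fintype Y] (n : ℕ) (N : X → Y → ℝ) : ℝ :=
  sSup { v : ℝ | ∃ (Λ : Matrix (Fin n × Fin n) (Fin n × Fin n) ℂ)
      (A : Bool → X → Matrix (Fin n) (Fin n) ℂ)
      (B : Y → Bool → Matrix (Fin n) (Fin n) ℂ),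
      Λ.PosSemidef ∧ Λ.trace = 1 ∧
      (∀ a x, (A a x).PosSemidef) ∧ (∀ a, ∑ x, A a x = 1) ∧
      (∀ y b, (B y b).PosSemidef) ∧ (∀ y, B y false + B y true = 1) ∧
      v = (1 / 2) * ∑ a : Bool, ∑ x, ∑ y,
            N x y * (((A a x ⊗ₖ B y a) * Λ).trace).re }

/-- The channel of Prevedel et al. -/
def Mchan : Fin 4 → Fin 6 → ℝ :=
  ![![1/3, 0, 1/3, 0, 1/3, 0],
    ![1/3, 0, 0, 1/3, 0, 1/3],
    ![0, 1/3, 1/3, 0, 0, 1/3],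
    ![0, 1/3, 0, 1/3, 1/3, 0]]

/-- The mod-2 inner product of the binary representations of `i` and `j`
(restricted to the first `s` bits), as a `Bool` (`true` = 1). -/
def binIP (s i j : ℕ) : Bool :=
  decide ((((Finset.range s).filter fun k => i.testBit k ∧ j.testBit k).card) % 2 = 1)

/-- The output distributions `ℓ_i` of the channel `T`:
`ℓ_i (j, t) = (2^s − 1)⁻¹ · [b_i · b_j = t]`, where the output pair `(j, t)`
with `j ∈ {1, …, 2^s − 1}` is encoded as `(j', t) : Fin (2^s - 1) × Bool`
with `j = j' + 1`, and `t = true` encodes `1`. -/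
def Tchan (s : ℕ) : Fin (2 ^ s) → Fin (2 ^ s - 1) × Bool → ℝ :=
  fun i jt =>
    if binIP s i.val (jt.1.val + 1) = jt.2 then ((2 : ℝ) ^ s - 1)⁻¹ else 0

namespace RadAux

abbrev M2 := Matrix (Fin 2) (Fin 2) ℂ

lemma one_ne_zero_M2 : (1 : M2) ≠ 0 := by
  intro h
  have h' := congrFun (congrFun h 0) 0
  simp [Matrix.one_apply] at h'

lemma norm_one_M2 : ‖(1 : M2)‖ = 1 := by
  have h := Matrix.l2_opNorm_conjTranspose_mul_self (1 : M2)
  rw [Matrix.conjTranspose_one, one_mul] at h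
  have h1 : ‖(1 : M2)‖ ≠ 0 := norm_ne_zero_iff.mpr one_ne_zero_M2
  have h2 : ‖(1 : M2)‖ * 1 = ‖(1 : M2)‖ * ‖(1 : M2)‖ := by rw [mul_one, ← h]
  exact (mul_left_cancel₀ h1 h2).symm

lemma herm_smul_real {A : M2} (h : A.IsHermitian) (t : ℝ) :
    (((t : ℝ) : ℂ) • A).IsHermitian := by
  have h' : (((t : ℝ) : ℂ) • A)ᴴ = (star ((t : ℝ) : ℂ)) • Aᴴ := Matrix.conjTranspose_smul _ _
  rw [Matrix.IsHermitian, h', Complex.star_def, Complex.conj_ofReal, h]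

def nuv (X : M2) : ℝ := (X 0 0).re ^ 2 + Complex.normSq (X 0 1)

lemma nuv_nonneg (X : M2) : 0 ≤ nuv X := add_nonneg (sq_nonneg _) (Complex.normSq_nonneg _)

lemma herm_10 {X : M2} (h : X.IsHermitian) : X 1 0 = (starRingEnd ℂ) (X 0 1) := by
  conv_lhs => rw [← h]
  simp [Matrix.conjTranspose_apply]

lemma sq_eq_nuv {X : M2} (hH : X.IsHermitian) (h0 : X 1 1 = -X 0 0) :
    X * X = ((nuv X : ℝ) : ℂ) • 1 := by
  have h00 : ((X 0 0).re : ℂ) = X 0 0 := hH.coe_re_apply_self 0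
  have h10 : X 1 0 = (starRingEnd ℂ) (X 0 1) := herm_10 hH
  ext i j
  fin_cases i <;> fin_cases j <;>
    simp only [Fin.mk_zero, Fin.mk_one, Matrix.mul_apply, Fin.sum_univ_two, Matrix.smul_apply,
      Matrix.one_apply, Fin.isValue, smul_eq_mul, if_true, reduceIte, mul_one, mul_zero]
  · rw [h10, Complex.mul_conj, ← h00]
    simp [nuv]
    push_cast
    ring
  · rw [h0]; simp; ring
  · rw [h0, h10]; simp; ring
  · rw [h0, h10, mul_comm ((starRingEnd ℂ) (X 0 1)) (X 0 1), Complex.mul_conj, ← h00]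
    simp [nuv]
    push_cast
    ring

lemma norm_sq_eq_nuv {X : M2} (hH : X.IsHermitian) (h0 : X 1 1 = -X 0 0) :
    ‖X‖ ^ 2 = nuv X := by
  have h := Matrix.l2_opNorm_conjTranspose_mul_self X
  rw [show Xᴴ = X from hH, sq_eq_nuv hH h0, norm_smul, norm_one_M2, mul_one,
    Complex.norm_real, Real.norm_eq_abs, abs_of_nonneg (nuv_nonneg X)] at h
  rw [sq]
  exact h.symm

lemma nuv_par (V W : M2) : nuv (V + W) + nuv (V - W) = 2 * nuv V + 2 * nuv W := by
  simp only [nuv, Matrix.add_apply, Matrix.sub_apply, Complex.normSq_apply,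
    Complex.add_re, Complex.add_im, Complex.sub_re, Complex.sub_im]
  ring


lemma master {A P M : M2} (hAH : A.IsHermitian) (hA : ‖A‖ ≤ 1)
    (hPM : ‖P‖ ^ 2 + ‖M‖ ^ 2 ≤ 4) :
    ∃ C : M2, C.IsHermitian ∧
      ‖A + P - C‖ ≤ 1 + Real.sqrt 2 ∧ ‖A - P - C‖ ≤ 1 + Real.sqrt 2 ∧
      ‖-A + M - C‖ ≤ 1 + Real.sqrt 2 ∧ ‖-A - M - C‖ ≤ 1 + Real.sqrt 2 := by
  have hs0 : 0 ≤ ‖P‖ := norm_nonneg P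
  have hm0 : 0 ≤ ‖M‖ := norm_nonneg M
  have hs2 : ‖P‖ ≤ 2 := by nlinarith
  have hm2 : ‖M‖ ≤ 2 := by nlinarith
  have hsqrt : 0 ≤ Real.sqrt 2 := Real.sqrt_nonneg 2
  have hsq2 : Real.sqrt 2 ^ 2 = 2 := Real.sq_sqrt (by norm_num)
  have h8 : (‖P‖ + ‖M‖) ^ 2 ≤ (2 * Real.sqrt 2) ^ 2 := by
    rw [mul_pow, hsq2]; nlinarith [sq_nonneg (‖P‖ - ‖M‖)]
  have key : ‖P‖ + ‖M‖ ≤ 2 * Real.sqrt 2 := by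
    have e1 : ‖P‖ + ‖M‖ = Real.sqrt ((‖P‖ + ‖M‖) ^ 2) := (Real.sqrt_sq (by linarith)).symm
    rw [e1, show (2 * Real.sqrt 2) = Real.sqrt ((2 * Real.sqrt 2) ^ 2) from
      (Real.sqrt_sq (by positivity)).symm]
    exact Real.sqrt_le_sqrt h8
  set t : ℝ := (‖P‖ - ‖M‖) / 2 with ht
  have ht1 : t ≤ 1 := by rw [ht]; linarith
  have ht2 : -1 ≤ t := by rw [ht]; linarith
  refine ⟨((t : ℝ) : ℂ) • A, herm_smul_real hAH _, ?_, ?_, ?_, ?_⟩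
  · have e : A + P - ((t : ℝ) : ℂ) • A = ((1 - t : ℝ) : ℂ) • A + P := by
      push_cast; module
    calc ‖A + P - ((t : ℝ) : ℂ) • A‖ = ‖((1 - t : ℝ) : ℂ) • A + P‖ := by rw [e]
    _ ≤ ‖((1 - t : ℝ) : ℂ) • A‖ + ‖P‖ := norm_add_le _ _
    _ = |1 - t| * ‖A‖ + ‖P‖ := by rw [norm_smul, Complex.norm_real, Real.norm_eq_abs]
    _ ≤ (1 - t) * 1 + ‖P‖ := by
        rw [abs_of_nonneg (by linarith)]
        exact add_le_add (mul_le_mul_of_nonneg_left hA (by linarith)) le_rfl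
    _ = 1 + (‖P‖ + ‖M‖) / 2 := by rw [ht]; ring
    _ ≤ 1 + Real.sqrt 2 := by linarith
  · have e : A - P - ((t : ℝ) : ℂ) • A = ((1 - t : ℝ) : ℂ) • A - P := by
      push_cast; module
    calc ‖A - P - ((t : ℝ) : ℂ) • A‖ = ‖((1 - t : ℝ) : ℂ) • A - P‖ := by rw [e]
    _ ≤ ‖((1 - t : ℝ) : ℂ) • A‖ + ‖P‖ := norm_sub_le _ _
    _ = |1 - t| * ‖A‖ + ‖P‖ := by rw [norm_smul, Complex.norm_real, Real.norm_eq_abs]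
    _ ≤ (1 - t) * 1 + ‖P‖ := by
        rw [abs_of_nonneg (by linarith)]
        exact add_le_add (mul_le_mul_of_nonneg_left hA (by linarith)) le_rfl
    _ = 1 + (‖P‖ + ‖M‖) / 2 := by rw [ht]; ring
    _ ≤ 1 + Real.sqrt 2 := by linarith
  · have e : -A + M - ((t : ℝ) : ℂ) • A = ((-1 - t : ℝ) : ℂ) • A + M := by
      push_cast; module
    calc ‖-A + M - ((t : ℝ) : ℂ) • A‖ = ‖((-1 - t : ℝ) : ℂ) • A + M‖ := by rw [e]
    _ ≤ ‖((-1 - t : ℝ) : ℂ) • A‖ + ‖M‖ := norm_add_le _ _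
    _ = |-1 - t| * ‖A‖ + ‖M‖ := by rw [norm_smul, Complex.norm_real, Real.norm_eq_abs]
    _ ≤ (1 + t) * 1 + ‖M‖ := by
        rw [show |-1 - t| = 1 + t by rw [abs_of_nonpos (by linarith)]; ring]
        exact add_le_add (mul_le_mul_of_nonneg_left hA (by linarith)) le_rfl
    _ = 1 + (‖P‖ + ‖M‖) / 2 := by rw [ht]; ring
    _ ≤ 1 + Real.sqrt 2 := by linarith
  · have e : -A - M - ((t : ℝ) : ℂ) • A = ((-1 - t : ℝ) : ℂ) • A - M := by
      push_cast; module
    calc ‖-A - M - ((t : ℝ) : ℂ) • A‖ = ‖((-1 - t : ℝ) : ℂ) • A - M‖ := by rw [e]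
    _ ≤ ‖((-1 - t : ℝ) : ℂ) • A‖ + ‖M‖ := norm_sub_le _ _
    _ = |-1 - t| * ‖A‖ + ‖M‖ := by rw [norm_smul, Complex.norm_real, Real.norm_eq_abs]
    _ ≤ (1 + t) * 1 + ‖M‖ := by
        rw [show |-1 - t| = 1 + t by rw [abs_of_nonpos (by linarith)]; ring]
        exact add_le_add (mul_le_mul_of_nonneg_left hA (by linarith)) le_rfl
    _ = 1 + (‖P‖ + ‖M‖) / 2 := by rw [ht]; ring
    _ ≤ 1 + Real.sqrt 2 := by linarith

def GoodT (u1 u2 u3 : M2) (r : ℝ) : Prop :=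
  ∃ C : M2, C.IsHermitian ∧
    ‖u1 + u2 + u3 - C‖ ≤ r ∧ ‖u1 - u2 - u3 - C‖ ≤ r ∧
    ‖-u1 + u2 - u3 - C‖ ≤ r ∧ ‖-u1 - u2 + u3 - C‖ ≤ r

lemma goodT_pivot1 {u1 u2 u3 : M2} (hH : u1.IsHermitian) (hn : ‖u1‖ ≤ 1)
    (hPM : ‖u2 + u3‖ ^ 2 + ‖u2 - u3‖ ^ 2 ≤ 4) : GoodT u1 u2 u3 (1 + Real.sqrt 2) := by
  obtain ⟨C, hC, h1, h2, h3, h4⟩ := master hH hn hPM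
  refine ⟨C, hC, ?_, ?_, ?_, ?_⟩
  · rw [show u1 + u2 + u3 - C = u1 + (u2 + u3) - C by abel]; exact h1
  · rw [show u1 - u2 - u3 - C = u1 - (u2 + u3) - C by abel]; exact h2
  · rw [show -u1 + u2 - u3 - C = -u1 + (u2 - u3) - C by abel]; exact h3
  · rw [show -u1 - u2 + u3 - C = -u1 - (u2 - u3) - C by abel]; exact h4

lemma goodT_pivot2 {u1 u2 u3 : M2} (hH : u2.IsHermitian) (hn : ‖u2‖ ≤ 1)
    (hPM : ‖u1 + u3‖ ^ 2 + ‖u1 - u3‖ ^ 2 ≤ 4) : GoodT u1 u2 u3 (1 + Real.sqrt 2) := by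
  obtain ⟨C, hC, h1, h2, h3, h4⟩ := master hH hn hPM
  refine ⟨C, hC, ?_, ?_, ?_, ?_⟩
  · rw [show u1 + u2 + u3 - C = u2 + (u1 + u3) - C by abel]; exact h1
  · rw [show u1 - u2 - u3 - C = -u2 + (u1 - u3) - C by abel]; exact h3
  · rw [show -u1 + u2 - u3 - C = u2 - (u1 + u3) - C by abel]; exact h2
  · rw [show -u1 - u2 + u3 - C = -u2 - (u1 - u3) - C by abel]; exact h4

lemma goodT_pivot3 {u1 u2 u3 : M2} (hH : u3.IsHermitian) (hn : ‖u3‖ ≤ 1)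
    (hPM : ‖u1 + u2‖ ^ 2 + ‖u1 - u2‖ ^ 2 ≤ 4) : GoodT u1 u2 u3 (1 + Real.sqrt 2) := by
  obtain ⟨C, hC, h1, h2, h3, h4⟩ := master hH hn hPM
  refine ⟨C, hC, ?_, ?_, ?_, ?_⟩
  · rw [show u1 + u2 + u3 - C = u3 + (u1 + u2) - C by abel]; exact h1
  · rw [show u1 - u2 - u3 - C = -u3 + (u1 - u2) - C by abel]; exact h3
  · rw [show -u1 + u2 - u3 - C = -u3 - (u1 - u2) - C by abel]; exact h4
  · rw [show -u1 - u2 + u3 - C = u3 - (u1 + u2) - C by abel]; exact h2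


lemma goodT_comb1 {x y u2 u3 : M2} {r : ℝ} (hr : 0 ≤ r) {w : ℝ} (h0 : 0 ≤ w) (h1 : w ≤ 1)
    (hx : GoodT x u2 u3 r) (hy : GoodT y u2 u3 r) :
    GoodT (((w : ℝ) : ℂ) • x + ((1 - w : ℝ) : ℂ) • y) u2 u3 r := by
  obtain ⟨C1, hC1, a1, a2, a3, a4⟩ := hx
  obtain ⟨C2, hC2, b1, b2, b3, b4⟩ := hy
  have hcomb : ∀ X Y : M2, ‖X - C1‖ ≤ r → ‖Y - C2‖ ≤ r →
      ‖((w : ℝ) : ℂ) • X + ((1 - w : ℝ) : ℂ) • Y -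
        (((w : ℝ) : ℂ) • C1 + ((1 - w : ℝ) : ℂ) • C2)‖ ≤ r := by
    intro X Y hX hY
    have e : ((w : ℝ) : ℂ) • X + ((1 - w : ℝ) : ℂ) • Y -
        (((w : ℝ) : ℂ) • C1 + ((1 - w : ℝ) : ℂ) • C2) =
        ((w : ℝ) : ℂ) • (X - C1) + ((1 - w : ℝ) : ℂ) • (Y - C2) := by
      push_cast; module
    rw [e]
    calc ‖((w : ℝ) : ℂ) • (X - C1) + ((1 - w : ℝ) : ℂ) • (Y - C2)‖
        ≤ ‖((w : ℝ) : ℂ) • (X - C1)‖ + ‖((1 - w : ℝ) : ℂ) • (Y - C2)‖ := norm_add_le _ _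
    _ = |w| * ‖X - C1‖ + |1 - w| * ‖Y - C2‖ := by
        rw [norm_smul, norm_smul, Complex.norm_real, Complex.norm_real,
          Real.norm_eq_abs, Real.norm_eq_abs]
    _ = w * ‖X - C1‖ + (1 - w) * ‖Y - C2‖ := by
        rw [abs_of_nonneg h0, abs_of_nonneg (by linarith)]
    _ ≤ w * r + (1 - w) * r := by
        exact add_le_add (mul_le_mul_of_nonneg_left hX h0)
          (mul_le_mul_of_nonneg_left hY (by linarith))
    _ = r := by ring
  refine ⟨((w : ℝ) : ℂ) • C1 + ((1 - w : ℝ) : ℂ) • C2,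
    (herm_smul_real hC1 w).add (herm_smul_real hC2 (1 - w)), ?_, ?_, ?_, ?_⟩
  · have e : ((w : ℝ) : ℂ) • x + ((1 - w : ℝ) : ℂ) • y + u2 + u3 =
        ((w : ℝ) : ℂ) • (x + u2 + u3) + ((1 - w : ℝ) : ℂ) • (y + u2 + u3) := by
      push_cast; module
    rw [e]; exact hcomb _ _ a1 b1
  · have e : ((w : ℝ) : ℂ) • x + ((1 - w : ℝ) : ℂ) • y - u2 - u3 =
        ((w : ℝ) : ℂ) • (x - u2 - u3) + ((1 - w : ℝ) : ℂ) • (y - u2 - u3) := by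
      push_cast; module
    rw [e]; exact hcomb _ _ a2 b2
  · have e : -(((w : ℝ) : ℂ) • x + ((1 - w : ℝ) : ℂ) • y) + u2 - u3 =
        ((w : ℝ) : ℂ) • (-x + u2 - u3) + ((1 - w : ℝ) : ℂ) • (-y + u2 - u3) := by
      push_cast; module
    rw [e]; exact hcomb _ _ a3 b3
  · have e : -(((w : ℝ) : ℂ) • x + ((1 - w : ℝ) : ℂ) • y) - u2 + u3 =
        ((w : ℝ) : ℂ) • (-x - u2 + u3) + ((1 - w : ℝ) : ℂ) • (-y - u2 + u3) := by
      push_cast; module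
    rw [e]; exact hcomb _ _ a4 b4

lemma goodT_comb2 {u1 x y u3 : M2} {r : ℝ} (hr : 0 ≤ r) {w : ℝ} (h0 : 0 ≤ w) (h1 : w ≤ 1)
    (hx : GoodT u1 x u3 r) (hy : GoodT u1 y u3 r) :
    GoodT u1 (((w : ℝ) : ℂ) • x + ((1 - w : ℝ) : ℂ) • y) u3 r := by
  obtain ⟨C1, hC1, a1, a2, a3, a4⟩ := hx
  obtain ⟨C2, hC2, b1, b2, b3, b4⟩ := hy
  have hcomb : ∀ X Y : M2, ‖X - C1‖ ≤ r → ‖Y - C2‖ ≤ r →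
      ‖((w : ℝ) : ℂ) • X + ((1 - w : ℝ) : ℂ) • Y -
        (((w : ℝ) : ℂ) • C1 + ((1 - w : ℝ) : ℂ) • C2)‖ ≤ r := by
    intro X Y hX hY
    have e : ((w : ℝ) : ℂ) • X + ((1 - w : ℝ) : ℂ) • Y -
        (((w : ℝ) : ℂ) • C1 + ((1 - w : ℝ) : ℂ) • C2) =
        ((w : ℝ) : ℂ) • (X - C1) + ((1 - w : ℝ) : ℂ) • (Y - C2) := by
      push_cast; module
    rw [e]
    calc ‖((w : ℝ) : ℂ) • (X - C1) + ((1 - w : ℝ) : ℂ) • (Y - C2)‖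
        ≤ ‖((w : ℝ) : ℂ) • (X - C1)‖ + ‖((1 - w : ℝ) : ℂ) • (Y - C2)‖ := norm_add_le _ _
    _ = |w| * ‖X - C1‖ + |1 - w| * ‖Y - C2‖ := by
        rw [norm_smul, norm_smul, Complex.norm_real, Complex.norm_real,
          Real.norm_eq_abs, Real.norm_eq_abs]
    _ = w * ‖X - C1‖ + (1 - w) * ‖Y - C2‖ := by
        rw [abs_of_nonneg h0, abs_of_nonneg (by linarith)]
    _ ≤ w * r + (1 - w) * r := by
        exact add_le_add (mul_le_mul_of_nonneg_left hX h0)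
          (mul_le_mul_of_nonneg_left hY (by linarith))
    _ = r := by ring
  refine ⟨((w : ℝ) : ℂ) • C1 + ((1 - w : ℝ) : ℂ) • C2,
    (herm_smul_real hC1 w).add (herm_smul_real hC2 (1 - w)), ?_, ?_, ?_, ?_⟩
  · have e : u1 + (((w : ℝ) : ℂ) • x + ((1 - w : ℝ) : ℂ) • y) + u3 =
        ((w : ℝ) : ℂ) • (u1 + x + u3) + ((1 - w : ℝ) : ℂ) • (u1 + y + u3) := by
      push_cast; module
    rw [e]; exact hcomb _ _ a1 b1
  · have e : u1 - (((w : ℝ) : ℂ) • x + ((1 - w : ℝ) : ℂ) • y) - u3 =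
        ((w : ℝ) : ℂ) • (u1 - x - u3) + ((1 - w : ℝ) : ℂ) • (u1 - y - u3) := by
      push_cast; module
    rw [e]; exact hcomb _ _ a2 b2
  · have e : -u1 + (((w : ℝ) : ℂ) • x + ((1 - w : ℝ) : ℂ) • y) - u3 =
        ((w : ℝ) : ℂ) • (-u1 + x - u3) + ((1 - w : ℝ) : ℂ) • (-u1 + y - u3) := by
      push_cast; module
    rw [e]; exact hcomb _ _ a3 b3
  · have e : -u1 - (((w : ℝ) : ℂ) • x + ((1 - w : ℝ) : ℂ) • y) + u3 =
        ((w : ℝ) : ℂ) • (-u1 - x + u3) + ((1 - w : ℝ) : ℂ) • (-u1 - y + u3) := by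
      push_cast; module
    rw [e]; exact hcomb _ _ a4 b4

lemma goodT_comb3 {u1 u2 x y : M2} {r : ℝ} (hr : 0 ≤ r) {w : ℝ} (h0 : 0 ≤ w) (h1 : w ≤ 1)
    (hx : GoodT u1 u2 x r) (hy : GoodT u1 u2 y r) :
    GoodT u1 u2 (((w : ℝ) : ℂ) • x + ((1 - w : ℝ) : ℂ) • y) r := by
  obtain ⟨C1, hC1, a1, a2, a3, a4⟩ := hx
  obtain ⟨C2, hC2, b1, b2, b3, b4⟩ := hy
  have hcomb : ∀ X Y : M2, ‖X - C1‖ ≤ r → ‖Y - C2‖ ≤ r →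
      ‖((w : ℝ) : ℂ) • X + ((1 - w : ℝ) : ℂ) • Y -
        (((w : ℝ) : ℂ) • C1 + ((1 - w : ℝ) : ℂ) • C2)‖ ≤ r := by
    intro X Y hX hY
    have e : ((w : ℝ) : ℂ) • X + ((1 - w : ℝ) : ℂ) • Y -
        (((w : ℝ) : ℂ) • C1 + ((1 - w : ℝ) : ℂ) • C2) =
        ((w : ℝ) : ℂ) • (X - C1) + ((1 - w : ℝ) : ℂ) • (Y - C2) := by
      push_cast; module
    rw [e]
    calc ‖((w : ℝ) : ℂ) • (X - C1) + ((1 - w : ℝ) : ℂ) • (Y - C2)‖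
        ≤ ‖((w : ℝ) : ℂ) • (X - C1)‖ + ‖((1 - w : ℝ) : ℂ) • (Y - C2)‖ := norm_add_le _ _
    _ = |w| * ‖X - C1‖ + |1 - w| * ‖Y - C2‖ := by
        rw [norm_smul, norm_smul, Complex.norm_real, Complex.norm_real,
          Real.norm_eq_abs, Real.norm_eq_abs]
    _ = w * ‖X - C1‖ + (1 - w) * ‖Y - C2‖ := by
        rw [abs_of_nonneg h0, abs_of_nonneg (by linarith)]
    _ ≤ w * r + (1 - w) * r := by
        exact add_le_add (mul_le_mul_of_nonneg_left hX h0)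
          (mul_le_mul_of_nonneg_left hY (by linarith))
    _ = r := by ring
  refine ⟨((w : ℝ) : ℂ) • C1 + ((1 - w : ℝ) : ℂ) • C2,
    (herm_smul_real hC1 w).add (herm_smul_real hC2 (1 - w)), ?_, ?_, ?_, ?_⟩
  · have e : u1 + u2 + (((w : ℝ) : ℂ) • x + ((1 - w : ℝ) : ℂ) • y) =
        ((w : ℝ) : ℂ) • (u1 + u2 + x) + ((1 - w : ℝ) : ℂ) • (u1 + u2 + y) := by
      push_cast; module
    rw [e]; exact hcomb _ _ a1 b1
  · have e : u1 - u2 - (((w : ℝ) : ℂ) • x + ((1 - w : ℝ) : ℂ) • y) =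
        ((w : ℝ) : ℂ) • (u1 - u2 - x) + ((1 - w : ℝ) : ℂ) • (u1 - u2 - y) := by
      push_cast; module
    rw [e]; exact hcomb _ _ a2 b2
  · have e : -u1 + u2 - (((w : ℝ) : ℂ) • x + ((1 - w : ℝ) : ℂ) • y) =
        ((w : ℝ) : ℂ) • (-u1 + u2 - x) + ((1 - w : ℝ) : ℂ) • (-u1 + u2 - y) := by
      push_cast; module
    rw [e]; exact hcomb _ _ a3 b3
  · have e : -u1 - u2 + (((w : ℝ) : ℂ) • x + ((1 - w : ℝ) : ℂ) • y) =
        ((w : ℝ) : ℂ) • (-u1 - u2 + x) + ((1 - w : ℝ) : ℂ) • (-u1 - u2 + y) := by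
      push_cast; module
    rw [e]; exact hcomb _ _ a4 b4

/-- Scalar-type component: a real multiple of the identity, with coefficient in `[-1,1]`. -/
def IsS (Z : M2) : Prop := ∃ σ : ℝ, |σ| ≤ 1 ∧ Z = ((σ : ℝ) : ℂ) • 1

/-- Traceless-type component: traceless Hermitian with norm at most `1`. -/
def IsV (Z : M2) : Prop := Z.IsHermitian ∧ Z 1 1 = -Z 0 0 ∧ ‖Z‖ ≤ 1

lemma IsS.herm {Z : M2} (h : IsS Z) : Z.IsHermitian := by
  obtain ⟨σ, _, rfl⟩ := h
  exact herm_smul_real Matrix.isHermitian_one σ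

lemma IsS.norm_le {Z : M2} (h : IsS Z) : ‖Z‖ ≤ 1 := by
  obtain ⟨σ, hσ, rfl⟩ := h
  rw [norm_smul, Complex.norm_real, Real.norm_eq_abs, norm_one_M2, mul_one]
  exact hσ

lemma pair_SS {Z W : M2} (hZ : IsS Z) (hW : IsS W) :
    ‖Z + W‖ ^ 2 + ‖Z - W‖ ^ 2 ≤ 4 := by
  obtain ⟨σ, hσ, rfl⟩ := hZ
  obtain ⟨τ, hτ, rfl⟩ := hW
  have e1 : ((σ : ℝ) : ℂ) • (1 : M2) + ((τ : ℝ) : ℂ) • 1 = ((σ + τ : ℝ) : ℂ) • 1 := by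
    push_cast; module
  have e2 : ((σ : ℝ) : ℂ) • (1 : M2) - ((τ : ℝ) : ℂ) • 1 = ((σ - τ : ℝ) : ℂ) • 1 := by
    push_cast; module
  rw [e1, e2, norm_smul, norm_smul, Complex.norm_real, Complex.norm_real,
    Real.norm_eq_abs, Real.norm_eq_abs, norm_one_M2, mul_one, mul_one, sq_abs, sq_abs]
  have h1 : σ ^ 2 ≤ 1 := by nlinarith [abs_nonneg σ, sq_abs σ]
  have h2 : τ ^ 2 ≤ 1 := by nlinarith [abs_nonneg τ, sq_abs τ]
  nlinarith

lemma pair_VV {Z W : M2} (hZ : IsV Z) (hW : IsV W) :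
    ‖Z + W‖ ^ 2 + ‖Z - W‖ ^ 2 ≤ 4 := by
  obtain ⟨hZH, hZ11, hZn⟩ := hZ
  obtain ⟨hWH, hW11, hWn⟩ := hW
  have hadd11 : (Z + W) 1 1 = -(Z + W) 0 0 := by
    simp only [Matrix.add_apply, hZ11, hW11]; ring
  have hsub11 : (Z - W) 1 1 = -(Z - W) 0 0 := by
    simp only [Matrix.sub_apply, hZ11, hW11]; ring
  rw [norm_sq_eq_nuv (hZH.add hWH) hadd11, norm_sq_eq_nuv (hZH.sub hWH) hsub11, nuv_par]
  have h1 : nuv Z = ‖Z‖ ^ 2 := (norm_sq_eq_nuv hZH hZ11).symm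
  have h2 : nuv W = ‖W‖ ^ 2 := (norm_sq_eq_nuv hWH hW11).symm
  have h3 : ‖Z‖ ^ 2 ≤ 1 := by nlinarith [norm_nonneg Z]
  have h4 : ‖W‖ ^ 2 ≤ 1 := by nlinarith [norm_nonneg W]
  rw [h1, h2]
  linarith

lemma leaf {Z1 Z2 Z3 : M2} (h1 : IsS Z1 ∨ IsV Z1) (h2 : IsS Z2 ∨ IsV Z2)
    (h3 : IsS Z3 ∨ IsV Z3) : GoodT Z1 Z2 Z3 (1 + Real.sqrt 2) := by
  rcases h1 with h1 | h1 <;> rcases h2 with h2 | h2 <;> rcases h3 with h3 | h3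
  · exact goodT_pivot1 h1.herm h1.norm_le (pair_SS h2 h3)
  · exact goodT_pivot3 h3.1 h3.2.2 (pair_SS h1 h2)
  · exact goodT_pivot2 h2.1 h2.2.2 (pair_SS h1 h3)
  · exact goodT_pivot1 h1.herm h1.norm_le (pair_VV h2 h3)
  · exact goodT_pivot1 h1.1 h1.2.2 (pair_SS h2 h3)
  · exact goodT_pivot2 h2.herm h2.norm_le (pair_VV h1 h3)
  · exact goodT_pivot3 h3.herm h3.norm_le (pair_VV h1 h2)
  · exact goodT_pivot1 h1.1 h1.2.2 (pair_VV h2 h3)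


lemma proj_struct {Q : M2} (hH : Q.IsHermitian) (hP : Q * Q = Q) :
    ∃ m : ℝ, (m = 0 ∨ m = 1 / 2 ∨ m = 1) ∧
      (Q - ((m : ℝ) : ℂ) • 1).IsHermitian ∧
      (Q - ((m : ℝ) : ℂ) • 1) 1 1 = -(Q - ((m : ℝ) : ℂ) • 1) 0 0 ∧
      ‖Q - ((m : ℝ) : ℂ) • 1‖ = Real.sqrt (m * (1 - m)) := by
  set p : ℝ := (Q 0 0).re with hp
  set q : ℝ := (Q 1 1).re with hq
  set z : ℂ := Q 0 1 with hz
  have h00 : Q 0 0 = ((p : ℝ) : ℂ) := (hH.coe_re_apply_self 0).symm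
  have h11 : Q 1 1 = ((q : ℝ) : ℂ) := (hH.coe_re_apply_self 1).symm
  have h10 : Q 1 0 = (starRingEnd ℂ) z := herm_10 hH
  have e00C := congrFun (congrFun hP 0) 0
  have e11C := congrFun (congrFun hP 1) 1
  have e01C := congrFun (congrFun hP 0) 1
  rw [Matrix.mul_apply, Fin.sum_univ_two] at e00C e11C e01C
  rw [h00, h10, Complex.mul_conj] at e00C
  rw [h10, h11, mul_comm ((starRingEnd ℂ) z) z, Complex.mul_conj] at e11C
  rw [h00, h11] at e01C
  have e00 : p * p + Complex.normSq z = p := by exact_mod_cast e00C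
  have e11 : Complex.normSq z + q * q = q := by exact_mod_cast e11C
  have e01 : z * (((p + q - 1 : ℝ) : ℂ)) = 0 := by push_cast; linear_combination e01C
  set m : ℝ := (p + q) / 2 with hm
  have tri : m = 0 ∨ m = 1 / 2 ∨ m = 1 := by
    rcases mul_eq_zero.mp e01 with hz0 | hpq
    · have hns : Complex.normSq z = 0 := by rw [hz0]; simp
      have hp' : p * (p - 1) = 0 := by nlinarith [e00]
      have hq' : q * (q - 1) = 0 := by nlinarith [e11]
      have hp0 : p = 0 ∨ p = 1 := by
        rcases mul_eq_zero.mp hp' with h | h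
        · exact Or.inl h
        · exact Or.inr (by linarith)
      have hq0 : q = 0 ∨ q = 1 := by
        rcases mul_eq_zero.mp hq' with h | h
        · exact Or.inl h
        · exact Or.inr (by linarith)
      rcases hp0 with h | h <;> rcases hq0 with h' | h'
      · left; rw [hm, h, h']; norm_num
      · right; left; rw [hm, h, h']; norm_num
      · right; left; rw [hm, h, h']; norm_num
      · right; right; rw [hm, h, h']; norm_num
    · have : p + q = 1 := by
        have := hpq
        have h2 : ((p + q - 1 : ℝ) : ℂ) = 0 := this
        have := Complex.ofReal_eq_zero.mp h2
        linarith
      right; left; rw [hm, this]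
  have hdevH : (Q - ((m : ℝ) : ℂ) • 1).IsHermitian :=
    hH.sub (herm_smul_real Matrix.isHermitian_one m)
  have hdev11 : (Q - ((m : ℝ) : ℂ) • 1) 1 1 = -(Q - ((m : ℝ) : ℂ) • 1) 0 0 := by
    simp only [Matrix.sub_apply, Matrix.smul_apply, Matrix.one_apply_eq, smul_eq_mul, mul_one,
      h00, h11]
    rw [hm]; push_cast; ring
  have hdev00 : (Q - ((m : ℝ) : ℂ) • 1) 0 0 = ((p - m : ℝ) : ℂ) := by
    simp only [Matrix.sub_apply, Matrix.smul_apply, Matrix.one_apply_eq, smul_eq_mul, mul_one,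
      h00]
    push_cast; ring
  have hdev01 : (Q - ((m : ℝ) : ℂ) • 1) 0 1 = z := by
    simp only [Matrix.sub_apply, Matrix.smul_apply, Matrix.one_apply, smul_eq_mul, hz]
    norm_num
  have hnuv : nuv (Q - ((m : ℝ) : ℂ) • 1) = m * (1 - m) := by
    rw [nuv, hdev00, hdev01]
    simp only [Complex.ofReal_re]
    rw [hm]; nlinarith [e00, e11]
  refine ⟨m, tri, hdevH, hdev11, ?_⟩
  have := norm_sq_eq_nuv hdevH hdev11
  rw [hnuv] at this
  rw [← this, Real.sqrt_sq (norm_nonneg _)]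


lemma sqrt_quarter : Real.sqrt (1 / 2 * (1 - 1 / 2)) = 1 / 2 := by
  rw [show (1 / 2 * (1 - 1 / 2) : ℝ) = (1 / 2) ^ 2 by norm_num,
    Real.sqrt_sq (by norm_num : (0:ℝ) ≤ 1 / 2)]

lemma pair_decomp {Q R : M2} (hQH : Q.IsHermitian) (hQ : Q * Q = Q)
    (hRH : R.IsHermitian) (hR : R * R = R) :
    ∃ (w : ℝ) (X Y : M2), 0 ≤ w ∧ w ≤ 1 ∧ IsS X ∧ IsV Y ∧
      Q - R = ((w : ℝ) : ℂ) • X + ((1 - w : ℝ) : ℂ) • Y := by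
  obtain ⟨mq, hmq, hQdH, hQd11, hQdn⟩ := proj_struct hQH hQ
  obtain ⟨mr, hmr, hRdH, hRd11, hRdn⟩ := proj_struct hRH hR
  set B : M2 := (Q - ((mq : ℝ) : ℂ) • 1) - (R - ((mr : ℝ) : ℂ) • 1) with hBdef
  have hid : Q - R = ((mq - mr : ℝ) : ℂ) • (1 : M2) + B := by
    rw [hBdef]; push_cast; module
  have hBH : B.IsHermitian := hQdH.sub hRdH
  have hB11 : B 1 1 = -B 0 0 := by
    rw [hBdef]
    simp only [Matrix.sub_apply, hQd11, hRd11]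
    ring
  have hBn : ‖B‖ ≤ Real.sqrt (mq * (1 - mq)) + Real.sqrt (mr * (1 - mr)) := by
    rw [← hQdn, ← hRdn, hBdef]
    exact norm_sub_le _ _
  clear hQdn hRdn hQd11 hRd11 hQdH hRdH
  have finish : ∀ w σ c : ℝ, 0 ≤ w → w ≤ 1 → |σ| ≤ 1 → w * σ = mq - mr →
      (1 - w) * c = 1 → 0 ≤ c → ‖B‖ * c ≤ 1 →
      ∃ (w' : ℝ) (X Y : M2), 0 ≤ w' ∧ w' ≤ 1 ∧ IsS X ∧ IsV Y ∧
        Q - R = ((w' : ℝ) : ℂ) • X + ((1 - w' : ℝ) : ℂ) • Y := by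
    intro w σ c h0 h1 hσ hwσ hc hc0 hBc
    refine ⟨w, ((σ : ℝ) : ℂ) • 1, ((c : ℝ) : ℂ) • B, h0, h1, ⟨σ, hσ, rfl⟩,
      ⟨herm_smul_real hBH c, ?_, ?_⟩, ?_⟩
    · simp only [Matrix.smul_apply, hB11, smul_eq_mul]; ring
    · rw [norm_smul, Complex.norm_real, Real.norm_eq_abs, abs_of_nonneg hc0, mul_comm]
      exact hBc
    · rw [hid, smul_smul, smul_smul]
      have c1 : ((w : ℝ) : ℂ) * ((σ : ℝ) : ℂ) = ((mq - mr : ℝ) : ℂ) := by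
        push_cast; exact_mod_cast congrArg Complex.ofReal hwσ
      have c2 : ((1 - w : ℝ) : ℂ) * ((c : ℝ) : ℂ) = 1 := by
        rw [← Complex.ofReal_mul, hc, Complex.ofReal_one]
      rw [c1, c2, one_smul]
  have finish0 : ‖B‖ ≤ 0 → |mq - mr| ≤ 1 →
      ∃ (w' : ℝ) (X Y : M2), 0 ≤ w' ∧ w' ≤ 1 ∧ IsS X ∧ IsV Y ∧
        Q - R = ((w' : ℝ) : ℂ) • X + ((1 - w' : ℝ) : ℂ) • Y := by
    intro hB0 ha
    have hBzero : B = 0 := norm_le_zero_iff.mp hB0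
    refine ⟨1, ((mq - mr : ℝ) : ℂ) • 1, 0, by norm_num, le_refl 1,
      ⟨mq - mr, ha, rfl⟩, ⟨Matrix.isHermitian_zero, by simp, by simp⟩, ?_⟩
    rw [hid, hBzero]
    push_cast
    module
  rcases hmq with h | h | h <;> rcases hmr with h' | h' | h' <;> subst h <;> subst h' <;>
      try simp only [sqrt_quarter] at hBn
  · refine finish0 (by simpa using hBn) (by norm_num)
  · refine finish (1/2) (-1) 2 (by norm_num) (by norm_num) (by norm_num) (by norm_num)
      (by norm_num) (by norm_num) (by simp at hBn; linarith)
  · refine finish0 (by simpa using hBn) (by norm_num)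
  · refine finish (1/2) 1 2 (by norm_num) (by norm_num) (by norm_num) (by norm_num)
      (by norm_num) (by norm_num) (by simp at hBn; linarith)
  · refine finish 0 1 1 (by norm_num) (by norm_num) (by norm_num) (by norm_num)
      (by norm_num) (by norm_num) (by linarith)
  · refine finish (1/2) (-1) 2 (by norm_num) (by norm_num) (by norm_num) (by norm_num)
      (by norm_num) (by norm_num) (by simp at hBn; linarith)
  · refine finish0 (by simpa using hBn) (by norm_num)
  · refine finish (1/2) 1 2 (by norm_num) (by norm_num) (by norm_num) (by norm_num)
      (by norm_num) (by norm_num) (by simp at hBn; linarith)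
  · refine finish0 (by simpa using hBn) (by norm_num)

end RadAux

/-- For the Prevedel et al. channel `M` and any orthogonal projections
`P_1, …, P_6` on `ℂ²`, the radius of `{ ∑_y M(y|x) P_y : x }` is at most
`1/6 + 1/(3√2)`. -/
theorem mchan_radius_le (P : Fin 6 → Matrix (Fin 2) (Fin 2) ℂ)
    (hHerm : ∀ y, (P y).IsHermitian) (hProj : ∀ y, P y * P y = P y) :
    matRad (fun x => ∑ y, (Mchan x y : ℂ) • P y) ≤
      1 / 6 + 1 / (3 * Real.sqrt 2) := by
  classical
  open RadAux in
  obtain ⟨w1, X1, Y1, hw10, hw11, hX1, hY1, hD1⟩ :=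
    RadAux.pair_decomp (hHerm 0) (hProj 0) (hHerm 1) (hProj 1)
  obtain ⟨w2, X2, Y2, hw20, hw21, hX2, hY2, hD2⟩ :=
    RadAux.pair_decomp (hHerm 2) (hProj 2) (hHerm 3) (hProj 3)
  obtain ⟨w3, X3, Y3, hw30, hw31, hX3, hY3, hD3⟩ :=
    RadAux.pair_decomp (hHerm 4) (hProj 4) (hHerm 5) (hProj 5)
  have hr : (0:ℝ) ≤ 1 + Real.sqrt 2 := by positivity
  have hGood : RadAux.GoodT (P 0 - P 1) (P 2 - P 3) (P 4 - P 5) (1 + Real.sqrt 2) := by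
    rw [hD1, hD2, hD3]
    apply RadAux.goodT_comb1 hr hw10 hw11 <;>
      apply RadAux.goodT_comb2 hr hw20 hw21 <;>
        apply RadAux.goodT_comb3 hr hw30 hw31 <;>
          apply RadAux.leaf <;>
            first
              | exact Or.inl hX1 | exact Or.inr hY1.2
              | exact Or.inl hX2 | exact Or.inr hY2.2
              | exact Or.inl hX3 | exact Or.inr hY3.2
              | exact Or.inl hX1.2 | exact Or.inr ⟨hY1.1, hY1.2.1, hY1.2.2⟩
              | exact Or.inr hY1 | exact Or.inr hY2 | exact Or.inr hY3
  obtain ⟨C', hC'H, g1, g2, g3, g4⟩ := hGood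
  set Cf : Matrix (Fin 2) (Fin 2) ℂ :=
    ((6⁻¹ : ℝ) : ℂ) • (P 0 + P 1 + P 2 + P 3 + P 4 + P 5 + C') with hCf
  have hCfH : Cf.IsHermitian := by
    apply RadAux.herm_smul_real
    exact ((((((hHerm 0).add (hHerm 1)).add (hHerm 2)).add (hHerm 3)).add
      (hHerm 4)).add (hHerm 5)).add hC'H
  have target_eq : (1:ℝ) / 6 + 1 / (3 * Real.sqrt 2) = 6⁻¹ * (1 + Real.sqrt 2) := by
    have h2 : Real.sqrt 2 * Real.sqrt 2 = 2 := Real.mul_self_sqrt (by norm_num)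
    have hpos : (0:ℝ) < Real.sqrt 2 := Real.sqrt_pos.mpr (by norm_num)
    have e1 : (1:ℝ) / (3 * Real.sqrt 2) = Real.sqrt 2 / 6 := by
      rw [div_eq_div_iff (by positivity) (by norm_num)]
      nlinarith [h2]
    rw [e1]; ring
  rw [matRad, target_eq]
  have hbdd : BddBelow (Set.range fun C : { C : Matrix (Fin 2) (Fin 2) ℂ // C.IsHermitian } =>
      ⨆ i : Fin 4, ‖(fun x => ∑ y, (Mchan x y : ℂ) • P y) i - C.1‖) := by
    refine ⟨0, ?_⟩
    rintro v ⟨C, rfl⟩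
    exact Real.iSup_nonneg fun i => norm_nonneg _
  refine le_trans (ciInf_le hbdd ⟨Cf, hCfH⟩) ?_
  refine ciSup_le fun x => ?_
  have hnorm6 : ‖((6⁻¹ : ℝ) : ℂ)‖ = 6⁻¹ := by
    rw [Complex.norm_real, Real.norm_eq_abs, abs_of_nonneg (by norm_num)]
  fin_cases x
  · have e : (∑ y, (Mchan 0 y : ℂ) • P y) - Cf =
        ((6⁻¹ : ℝ) : ℂ) • ((P 0 - P 1) + (P 2 - P 3) + (P 4 - P 5) - C') := by
      rw [Fin.sum_univ_six, hCf]
      simp only [show Mchan 0 0 = 1/3 from rfl, show Mchan 0 1 = 0 from rfl, show Mchan 0 2 = 1/3 from rfl, show Mchan 0 3 = 0 from rfl, show Mchan 0 4 = 1/3 from rfl, show Mchan 0 5 = 0 from rfl]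
      push_cast
      module
    show ‖(∑ y, (Mchan 0 y : ℂ) • P y) - Cf‖ ≤ 6⁻¹ * (1 + Real.sqrt 2)
    rw [e, norm_smul, hnorm6]
    exact mul_le_mul_of_nonneg_left g1 (by norm_num)
  · have e : (∑ y, (Mchan 1 y : ℂ) • P y) - Cf =
        ((6⁻¹ : ℝ) : ℂ) • ((P 0 - P 1) - (P 2 - P 3) - (P 4 - P 5) - C') := by
      rw [Fin.sum_univ_six, hCf]
      simp only [show Mchan 1 0 = 1/3 from rfl, show Mchan 1 1 = 0 from rfl, show Mchan 1 2 = 0 from rfl, show Mchan 1 3 = 1/3 from rfl, show Mchan 1 4 = 0 from rfl, show Mchan 1 5 = 1/3 from rfl]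
      push_cast
      module
    show ‖(∑ y, (Mchan 1 y : ℂ) • P y) - Cf‖ ≤ 6⁻¹ * (1 + Real.sqrt 2)
    rw [e, norm_smul, hnorm6]
    exact mul_le_mul_of_nonneg_left g2 (by norm_num)
  · have e : (∑ y, (Mchan 2 y : ℂ) • P y) - Cf =
        ((6⁻¹ : ℝ) : ℂ) • (-(P 0 - P 1) + (P 2 - P 3) - (P 4 - P 5) - C') := by
      rw [Fin.sum_univ_six, hCf]
      simp only [show Mchan 2 0 = 0 from rfl, show Mchan 2 1 = 1/3 from rfl, show Mchan 2 2 = 1/3 from rfl, show Mchan 2 3 = 0 from rfl, show Mchan 2 4 = 0 from rfl, show Mchan 2 5 = 1/3 from rfl]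
      push_cast
      module
    show ‖(∑ y, (Mchan 2 y : ℂ) • P y) - Cf‖ ≤ 6⁻¹ * (1 + Real.sqrt 2)
    rw [e, norm_smul, hnorm6]
    exact mul_le_mul_of_nonneg_left g3 (by norm_num)
  · have e : (∑ y, (Mchan 3 y : ℂ) • P y) - Cf =
        ((6⁻¹ : ℝ) : ℂ) • (-(P 0 - P 1) - (P 2 - P 3) + (P 4 - P 5) - C') := by
      rw [Fin.sum_univ_six, hCf]
      simp only [show Mchan 3 0 = 0 from rfl, show Mchan 3 1 = 1/3 from rfl, show Mchan 3 2 = 0 from rfl, show Mchan 3 3 = 1/3 from rfl, show Mchan 3 4 = 1/3 from rfl, show Mchan 3 5 = 0 from rfl]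
      push_cast
      module
    show ‖(∑ y, (Mchan 3 y : ℂ) • P y) - Cf‖ ≤ 6⁻¹ * (1 + Real.sqrt 2)
    rw [e, norm_smul, hnorm6]
    exact mul_le_mul_of_nonneg_left g4 (by norm_num)

end
end

section
/- Let s ≥ 1 and let T be the channel with input alphabet {0,1,…,2^s−1} and output alphabet {1,…,2^s−1}×{0,1} defined by T((j,t)|i) = (2^s−1)^{-1}·[b_i·b_j = t], where b_i ∈ F_2^s is the binary representation of i and b_i·b_j is the mod-2 inner product. Then the ℓ¹-diameter of { ℓ_i : 0 ≤ i ≤ 2^s−1 } equals 2^s/(2^s−1), and consequently Succ(T) = 1/2 + 2^{s−2}/(2^s−1). -/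
open scoped Matrix Kronecker BigOperators Matrix.Norms.L2Operator ComplexOrder
open Matrix Finset

noncomputable section

private lemma binIP_zero_left (s m : ℕ) : binIP s 0 m = false := by
  simp [binIP]

private lemma binIP_zero_right (s v : ℕ) : binIP s v 0 = false := by
  simp [binIP]

private lemma binIP_xor_two_pow {s k : ℕ} (hk : k < s) (v j : ℕ) :
    binIP s v (j ^^^ 2 ^ k) = (v.testBit k ^^ binIP s v j) := by
  have htb : ∀ m, (j ^^^ 2 ^ k).testBit m = (j.testBit m ^^ decide (k = m)) := by
    intro m; rw [Nat.testBit_xor, Nat.testBit_two_pow]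
  by_cases hv : v.testBit k
  · set F := (Finset.range s).filter (fun m => v.testBit m ∧ j.testBit m) with hF
    have hcard : ((Finset.range s).filter
        (fun m => v.testBit m ∧ (j ^^^ 2 ^ k).testBit m)).card % 2
        = (F.card + 1) % 2 := by
      by_cases hj : j.testBit k
      · have hkF : k ∈ F := by simp [hF, Finset.mem_filter, hk, hv, hj]
        have hE : (Finset.range s).filter (fun m => v.testBit m ∧ (j ^^^ 2 ^ k).testBit m)
            = F.erase k := by
          ext m
          by_cases hmk : m = k
          · subst hmk; simp [Finset.mem_filter, htb, hj]
          · simp [Finset.mem_filter, Finset.mem_erase, htb, hmk, Ne.symm hmk, hF]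
        rw [hE, Finset.card_erase_of_mem hkF]
        have h1 : 1 ≤ F.card := Finset.card_pos.mpr ⟨k, hkF⟩
        omega
      · have hkF : k ∉ F := by simp [hF, Finset.mem_filter, hj]
        have hE : (Finset.range s).filter (fun m => v.testBit m ∧ (j ^^^ 2 ^ k).testBit m)
            = insert k F := by
          ext m
          by_cases hmk : m = k
          · subst hmk; simp [Finset.mem_filter, Finset.mem_insert, htb, hj, hk, hv]
          · simp [Finset.mem_filter, Finset.mem_insert, htb, hmk, Ne.symm hmk, hF]
        rw [hE, Finset.card_insert_of_notMem hkF]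
    simp only [binIP, hv, Bool.true_xor, ← hF]
    rw [hcard, ← decide_not, decide_eq_decide]
    omega
  · have hE : (Finset.range s).filter (fun m => v.testBit m ∧ (j ^^^ 2 ^ k).testBit m)
        = (Finset.range s).filter (fun m => v.testBit m ∧ j.testBit m) := by
      apply Finset.filter_congr
      intro m _
      by_cases hmk : m = k
      · subst hmk; simp [hv]
      · simp [htb, Ne.symm hmk]
    simp only [binIP, hE, hv, Bool.false_xor]

private lemma card_binIP_ne {s : ℕ} (a b : ℕ) (ha : a < 2 ^ s) (hb : b < 2 ^ s)
    (hab : a ≠ b) :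
    ((Finset.range (2 ^ s)).filter (fun m => ¬ binIP s a m = binIP s b m)).card
      = 2 ^ (s - 1) := by
  obtain ⟨k, hk⟩ : ∃ k, ¬ a.testBit k = b.testBit k := by
    by_contra h
    push_neg at h
    exact hab (Nat.eq_of_testBit_eq fun i => h i)
  have hks : k < s := by
    by_contra h
    push_neg at h
    have h2 : (2 : ℕ) ^ s ≤ 2 ^ k := Nat.pow_le_pow_right (by norm_num) h
    rw [Nat.testBit_lt_two_pow (lt_of_lt_of_le ha h2),
      Nat.testBit_lt_two_pow (lt_of_lt_of_le hb h2)] at hk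
    exact hk rfl
  have hswap : ∀ m, (¬ binIP s a (m ^^^ 2 ^ k) = binIP s b (m ^^^ 2 ^ k))
      ↔ (binIP s a m = binIP s b m) := by
    intro m
    rw [binIP_xor_two_pow hks, binIP_xor_two_pow hks]
    cases hta : a.testBit k <;> cases htb : b.testBit k <;>
      simp_all <;> cases binIP s a m <;> cases binIP s b m <;> simp_all
  have hmm : ∀ m ∈ Finset.range (2 ^ s), m ^^^ 2 ^ k ∈ Finset.range (2 ^ s) := by
    intro m hm
    rw [Finset.mem_range] at hm ⊢
    exact Nat.xor_lt_two_pow hm (Nat.pow_lt_pow_right (by norm_num) hks)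
  have hinv : ∀ m : ℕ, (m ^^^ 2 ^ k) ^^^ 2 ^ k = m := by
    intro m; rw [Nat.xor_assoc, Nat.xor_self, Nat.xor_zero]
  have hcards : ((Finset.range (2 ^ s)).filter
        (fun m => ¬ binIP s a m = binIP s b m)).card
      = ((Finset.range (2 ^ s)).filter
        (fun m => ¬ ¬ binIP s a m = binIP s b m)).card := by
    refine Finset.card_bij' (fun m _ => m ^^^ 2 ^ k) (fun m _ => m ^^^ 2 ^ k)
      ?_ ?_ (fun m _ => hinv m) (fun m _ => hinv m)
    · intro m hm
      rw [Finset.mem_filter] at hm ⊢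
      exact ⟨hmm m hm.1, by simpa [hswap m] using hm.2⟩
    · intro m hm
      rw [Finset.mem_filter] at hm ⊢
      refine ⟨hmm m hm.1, ?_⟩
      rw [hswap m]
      simpa using hm.2
  have htot := Finset.card_filter_add_card_filter_not
    (s := Finset.range (2 ^ s)) (fun m => ¬ binIP s a m = binIP s b m)
  rw [Finset.card_range] at htot
  have hpow : (2 : ℕ) ^ s = 2 ^ (s - 1) * 2 := by
    have h1 : 1 ≤ s := Nat.one_le_iff_ne_zero.mpr (by
      rintro rfl
      interval_cases a <;> interval_cases b <;> simp_all)
    rw [← pow_succ]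
    congr 1
    omega
  omega


private lemma sum_fin_shift (s : ℕ) (f : ℕ → ℝ) (hf0 : f 0 = 0) :
    ∑ j : Fin (2 ^ s - 1), f (j.val + 1) = ∑ m ∈ Finset.range (2 ^ s), f m := by
  have h : 2 ^ s - 1 + 1 = 2 ^ s := Nat.sub_add_cancel Nat.one_le_two_pow
  have h2 := Finset.sum_range_succ' f (2 ^ s - 1)
  rw [h, hf0, add_zero] at h2
  rw [Fin.sum_univ_eq_sum_range (fun j => f (j + 1)) (2 ^ s - 1), h2]

/-- For the channel `T`, the `ℓ¹`-diameter of the output distributions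
`{ ℓ_i }` is `2^s / (2^s − 1)`, and hence
`Succ(T) = 1/2 + 2^{s−2} / (2^s − 1)`. -/
theorem tchan_diam_and_succ (s : ℕ) (hs : 1 ≤ s) :
    ((⨆ p : Fin (2 ^ s) × Fin (2 ^ s),
        ∑ jt, |Tchan s p.1 jt - Tchan s p.2 jt|) =
      (2 : ℝ) ^ s / ((2 : ℝ) ^ s - 1)) ∧
      Succ (Tchan s) = 1 / 2 + (2 : ℝ) ^ s / (4 * ((2 : ℝ) ^ s - 1)) := by
  -- basic real facts
  have h2s : (2 : ℝ) ≤ (2 : ℝ) ^ s := by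
    calc (2 : ℝ) = 2 ^ 1 := (pow_one 2).symm
    _ ≤ 2 ^ s := pow_le_pow_right₀ (by norm_num) hs
  have hpos : (0 : ℝ) < (2 : ℝ) ^ s - 1 := by linarith
  have hc0 : (0 : ℝ) ≤ ((2 : ℝ) ^ s - 1)⁻¹ := le_of_lt (inv_pos.mpr hpos)
  have hcard_fin : ((2 ^ s - 1 : ℕ) : ℝ) = (2 : ℝ) ^ s - 1 := by
    rw [Nat.cast_sub Nat.one_le_two_pow]; push_cast; ring
  have hpow : (2 : ℝ) ^ s = 2 * (2 : ℝ) ^ (s - 1) := by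
    have h : s = s - 1 + 1 := by omega
    calc (2 : ℝ) ^ s = 2 ^ (s - 1 + 1) := by rw [← h]
    _ = 2 * (2 : ℝ) ^ (s - 1) := by rw [pow_succ]; ring
  have h2lt : (1 : ℕ) < 2 ^ s := by
    have : (2 : ℕ) ^ 1 ≤ 2 ^ s := Nat.pow_le_pow_right (by norm_num) hs
    omega
  set c : ℝ := ((2 : ℝ) ^ s - 1)⁻¹ with hc
  have sum_one : ∀ x : Fin (2 ^ s), ∑ jt, Tchan s x jt = 1 := by
    intro x
    rw [Fintype.sum_prod_type]
    have h1 : ∀ j : Fin (2 ^ s - 1), ∑ t : Bool, Tchan s x (j, t) = c := by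
      intro j
      cases hb : binIP s x.val (j.val + 1) <;>
        simp [Tchan, Fintype.sum_bool, hb, hc]
    rw [Finset.sum_congr rfl fun j _ => h1 j, Finset.sum_const, Finset.card_univ,
      Fintype.card_fin, nsmul_eq_mul, hcard_fin, hc]
    field_simp
  have hdist : ∀ p : Fin (2 ^ s) × Fin (2 ^ s),
      ∑ jt, |Tchan s p.1 jt - Tchan s p.2 jt|
        = if p.1 = p.2 then 0 else (2 : ℝ) ^ s / ((2 : ℝ) ^ s - 1) := by
    rintro ⟨i, i'⟩
    by_cases hii : i = i'
    · subst hii; simp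
    · simp only [hii, if_false]
      rw [Fintype.sum_prod_type]
      have h1 : ∀ j : Fin (2 ^ s - 1), ∑ t : Bool, |Tchan s i (j, t) - Tchan s i' (j, t)|
          = if binIP s i.val (j.val + 1) = binIP s i'.val (j.val + 1) then 0 else 2 * c := by
        intro j
        have habs : |1 - (2:ℝ) ^ s| = 2 ^ s - 1 := by rw [abs_sub_comm, abs_of_pos hpos]
        cases hb : binIP s i.val (j.val + 1) <;> cases hb' : binIP s i'.val (j.val + 1) <;>
          simp [Tchan, Fintype.sum_bool, hb, hb', hc, abs_of_nonneg hc0, abs_sub_comm, habs] <;>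
          ring
      rw [Finset.sum_congr rfl fun j _ => h1 j]
      have h2 : (∑ j : Fin (2 ^ s - 1),
            if binIP s i.val (j.val + 1) = binIP s i'.val (j.val + 1) then 0 else 2 * c)
          = ∑ m ∈ Finset.range (2 ^ s),
            if binIP s i.val m = binIP s i'.val m then 0 else 2 * c := by
        exact sum_fin_shift s
          (fun m => if binIP s i.val m = binIP s i'.val m then 0 else 2 * c)
          (by simp [binIP_zero_right])
      rw [h2, Finset.sum_ite, Finset.sum_const, Finset.sum_const]
      rw [card_binIP_ne i.val i'.val i.isLt i'.isLt (fun h => hii (Fin.ext h))]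
      rw [nsmul_eq_mul, nsmul_eq_mul]
      push_cast
      rw [hc]
      rw [hpow]
      field_simp
      ring
  have hD0 : (0 : ℝ) ≤ (2 : ℝ) ^ s / ((2 : ℝ) ^ s - 1) := by positivity
  constructor
  · apply le_antisymm
    · apply ciSup_le
      intro p
      rw [hdist p]
      split <;> [exact hD0; exact le_rfl]
    · have hb : BddAbove (Set.range fun p : Fin (2 ^ s) × Fin (2 ^ s) =>
          ∑ jt, |Tchan s p.1 jt - Tchan s p.2 jt|) :=
        Set.Finite.bddAbove (Set.finite_range _)
      have h01 : (⟨0, by omega⟩ : Fin (2 ^ s)) ≠ ⟨1, h2lt⟩ := by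
        intro h
        simpa using congrArg Fin.val h
      have := le_ciSup hb ((⟨0, by omega⟩ : Fin (2 ^ s)), (⟨1, h2lt⟩ : Fin (2 ^ s)))
      rw [hdist _] at this
      simpa [h01] using this
  · -- Succ part
    have hval : ∀ z : Fin (2 ^ s) × Fin (2 ^ s) × (Fin (2 ^ s - 1) × Bool → Bool),
        (1 / 2) * (∑ y, if z.2.2 y = false then Tchan s z.1 y else 0) +
          (1 / 2) * (∑ y, if z.2.2 y = true then Tchan s z.2.1 y else 0)
          ≤ 1 / 2 + (2 : ℝ) ^ s / (4 * ((2 : ℝ) ^ s - 1)) := by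
      rintro ⟨x0, x1, g⟩
      have hbnd : ∀ y : Fin (2 ^ s - 1) × Bool,
          (if g y = false then Tchan s x0 y else 0) +
            (if g y = true then Tchan s x1 y else 0)
            ≤ (Tchan s x0 y + Tchan s x1 y + |Tchan s x0 y - Tchan s x1 y|) / 2 := by
        intro y
        cases hg : g y
        · have h1 := le_abs_self (Tchan s x0 y - Tchan s x1 y)
          simp only [hg]
          norm_num
          linarith [abs_nonneg (Tchan s x0 y - Tchan s x1 y)]
        · have h1 := neg_abs_le (Tchan s x0 y - Tchan s x1 y)
          simp only [hg]
          norm_num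
          linarith [abs_nonneg (Tchan s x0 y - Tchan s x1 y)]
      have hd : ∑ y, |Tchan s x0 y - Tchan s x1 y| ≤ (2 : ℝ) ^ s / ((2 : ℝ) ^ s - 1) := by
        rw [hdist (x0, x1)]
        split <;> [exact hD0; exact le_rfl]
      have hsum : (∑ y, if g y = false then Tchan s x0 y else 0) +
          (∑ y, if g y = true then Tchan s x1 y else 0)
          ≤ (1 + 1 + ∑ y, |Tchan s x0 y - Tchan s x1 y|) / 2 := by
        rw [← Finset.sum_add_distrib]
        calc (∑ y, ((if g y = false then Tchan s x0 y else 0) +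
                (if g y = true then Tchan s x1 y else 0)))
            ≤ ∑ y, (Tchan s x0 y + Tchan s x1 y + |Tchan s x0 y - Tchan s x1 y|) / 2 :=
              Finset.sum_le_sum fun y _ => hbnd y
          _ = (1 + 1 + ∑ y, |Tchan s x0 y - Tchan s x1 y|) / 2 := by
              rw [← Finset.sum_div, Finset.sum_add_distrib, Finset.sum_add_distrib,
                sum_one x0, sum_one x1]
      have heq : (2 : ℝ) ^ s / (4 * ((2 : ℝ) ^ s - 1))
          = ((2 : ℝ) ^ s / ((2 : ℝ) ^ s - 1)) / 4 := by
        field_simp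
      rw [heq]
      linarith
    apply le_antisymm
    · exact ciSup_le hval
    · have hb : BddAbove (Set.range fun z : Fin (2 ^ s) × Fin (2 ^ s) ×
          (Fin (2 ^ s - 1) × Bool → Bool) =>
          (1 / 2) * (∑ y, if z.2.2 y = false then Tchan s z.1 y else 0) +
            (1 / 2) * (∑ y, if z.2.2 y = true then Tchan s z.2.1 y else 0)) :=
        Set.Finite.bddAbove (Set.finite_range _)
      have hle := le_ciSup hb ((⟨0, by omega⟩ : Fin (2 ^ s)), (⟨1, h2lt⟩ : Fin (2 ^ s)),
        fun y : Fin (2 ^ s - 1) × Bool => y.2)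
      have hA : (∑ y : Fin (2 ^ s - 1) × Bool,
          if y.2 = false then Tchan s (⟨0, by omega⟩ : Fin (2 ^ s)) y else 0) = 1 := by
        rw [Fintype.sum_prod_type]
        have h1 : ∀ j : Fin (2 ^ s - 1), (∑ t : Bool,
            if t = false then Tchan s (⟨0, by omega⟩ : Fin (2 ^ s)) (j, t) else 0) = c := by
          intro j
          simp [Fintype.sum_bool, Tchan, binIP_zero_left, hc]
        rw [Finset.sum_congr rfl fun j _ => h1 j, Finset.sum_const, Finset.card_univ,
          Fintype.card_fin, nsmul_eq_mul, hcard_fin, hc]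
        field_simp
      have hB : (∑ y : Fin (2 ^ s - 1) × Bool,
          if y.2 = true then Tchan s (⟨1, h2lt⟩ : Fin (2 ^ s)) y else 0)
          = (2 : ℝ) ^ (s - 1) * c := by
        rw [Fintype.sum_prod_type]
        have h1 : ∀ j : Fin (2 ^ s - 1), (∑ t : Bool,
            if t = true then Tchan s (⟨1, h2lt⟩ : Fin (2 ^ s)) (j, t) else 0)
            = if binIP s 1 (j.val + 1) = true then c else 0 := by
          intro j
          simp [Fintype.sum_bool, Tchan, hc]
        rw [Finset.sum_congr rfl fun j _ => h1 j]
        have h2 : (∑ j : Fin (2 ^ s - 1), if binIP s 1 (j.val + 1) = true then c else 0)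
            = ∑ m ∈ Finset.range (2 ^ s), if binIP s 1 m = true then c else 0 := by
          exact sum_fin_shift s (fun m => if binIP s 1 m = true then c else 0)
            (by simp [binIP_zero_right])
        rw [h2]
        have h3 : ∀ m, (binIP s 1 m = true) ↔ ¬ (binIP s 1 m = binIP s 0 m) := by
          intro m
          rw [binIP_zero_left]
          simp
        rw [Finset.sum_congr rfl fun m _ => by rw [if_congr (h3 m) rfl rfl]]
        rw [Finset.sum_ite, Finset.sum_const, Finset.sum_const,
          card_binIP_ne 1 0 h2lt (by positivity) (by norm_num)]
        simp
      rw [hA, hB] at hle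
      refine le_trans (le_of_eq ?_) hle
      rw [hc]
      nth_rewrite 1 [hpow]
      field_simp
      ring


end
end

section
/- Let s ≥ 1 and let ℓ_i ∈ ℝ^{{1,…,2^s−1}×{0,1}} (for 0 ≤ i ≤ 2^s−1) be defined by ℓ_i(j,t) = (2^s−1)^{-1}·[b_i·b_j = t], where b_i ∈ F_2^s is the binary representation of i and b_i·b_j is the mod-2 inner product. Then for every c ∈ ℝ^{{1,…,2^s−1}×{0,1}}, max_{0 ≤ i ≤ 2^s−1} ‖ℓ_i − c‖₁ ≥ 1; in particular the ℓ¹-radius Rad₁{ ℓ_i : 0 ≤ i ≤ 2^s−1 } is at least 1. -/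
open scoped Matrix Kronecker BigOperators Matrix.Norms.L2Operator ComplexOrder
open Matrix Finset

noncomputable section

open Finset

lemma zmod2_mod_iff (n : ℕ) : n % 2 = 1 ↔ (n : ZMod 2) = 1 := by
  have : ((n % 2 : ℕ) : ZMod 2) = (n : ZMod 2) := ZMod.natCast_mod n 2
  rcases Nat.mod_two_eq_zero_or_one n with h | h <;> rw [h] at this <;>
    simp only [Nat.cast_zero, Nat.cast_one] at this <;> rw [← this] <;> simp [h]

lemma binIP_cast (s i j : ℕ) :
    binIP s i j = true ↔
      (∑ m ∈ Finset.range s, (if i.testBit m ∧ j.testBit m then (1 : ZMod 2) else 0)) = 1 := by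
  rw [binIP, decide_eq_true_iff, zmod2_mod_iff]
  rw [Finset.card_filter, Nat.cast_sum]
  congr! 1
  refine Finset.sum_congr rfl fun m _ => ?_
  split <;> simp

lemma binIP_flip (s i j k : ℕ) (hk : k < s) (hjk : j.testBit k = true) :
    binIP s (i ^^^ 2 ^ k) j = ! binIP s i j := by
  set g : ℕ → ZMod 2 := fun a =>
    ∑ m ∈ Finset.range s, (if a.testBit m ∧ j.testBit m then (1 : ZMod 2) else 0) with hg
  have hsum : g (i ^^^ 2 ^ k) = g i + 1 := by
    have hpt : ∀ m ∈ Finset.range s,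
        (if (i ^^^ 2 ^ k).testBit m ∧ j.testBit m then (1 : ZMod 2) else 0)
          = (if i.testBit m ∧ j.testBit m then (1 : ZMod 2) else 0)
            + (if m = k then 1 else 0) := by
      intro m _
      rcases eq_or_ne m k with rfl | hmk
      · rw [Nat.testBit_xor, Nat.testBit_two_pow]
        simp only [hjk]
        cases hb : i.testBit m <;> simp [hb] <;> decide
      · rw [Nat.testBit_xor, Nat.testBit_two_pow]
        simp [hmk, Ne.symm hmk]
    rw [hg]
    simp only []
    rw [Finset.sum_congr rfl hpt, Finset.sum_add_distrib]
    congr 1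
    rw [Finset.sum_ite_eq' (Finset.range s) k (fun _ => (1 : ZMod 2))]
    simp [hk]
  have h01 : ∀ a : ZMod 2, a = 0 ∨ a = 1 := by decide
  cases hb : binIP s i j with
  | false =>
    have hgi : g i = 0 := by
      rcases h01 (g i) with h | h
      · exact h
      · exact absurd ((binIP_cast s i j).2 h) (by simp [hb])
    have : g (i ^^^ 2 ^ k) = 1 := by rw [hsum, hgi]; decide
    simp [(binIP_cast s (i ^^^ 2 ^ k) j).2 this]
  | true =>
    have hgi : g i = 1 := (binIP_cast s i j).1 hb
    have hne : g (i ^^^ 2 ^ k) ≠ 1 := by rw [hsum, hgi]; decide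
    have : binIP s (i ^^^ 2 ^ k) j ≠ true := fun h => hne ((binIP_cast s _ j).1 h)
    simp [Bool.eq_false_iff.2 this]

/-- For the output distributions `ℓ_i` of the channel `T` and any
`c ∈ ℝ^{{1,…,2^s−1}×{0,1}}`, we have `max_i ‖ℓ_i − c‖₁ ≥ 1`; in particular
the `ℓ¹`-radius of `{ ℓ_i }` is at least `1`. -/
theorem tchan_radius_ge_one (s : ℕ) (hs : 1 ≤ s) :
    (∀ c : Fin (2 ^ s - 1) × Bool → ℝ,
        1 ≤ ⨆ i : Fin (2 ^ s), ∑ jt, |Tchan s i jt - c jt|) ∧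
      1 ≤ ⨅ c : Fin (2 ^ s - 1) × Bool → ℝ,
            ⨆ i : Fin (2 ^ s), ∑ jt, |Tchan s i jt - c jt| := by
  have hM1 : 1 ≤ 2 ^ s := Nat.one_le_two_pow
  haveI : NeZero (2 ^ s) := ⟨by omega⟩
  have h2r : (2 : ℝ) ≤ (2 : ℝ) ^ s := by
    calc (2:ℝ) = 2 ^ 1 := (pow_one 2).symm
    _ ≤ 2 ^ s := pow_le_pow_right₀ one_le_two hs
  set r : ℝ := (2 : ℝ) ^ s - 1 with hrdef
  have hr1 : (1 : ℝ) ≤ r := by simp [hrdef]; linarith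
  have hr0 : (0 : ℝ) < r := lt_of_lt_of_le one_pos hr1
  have part1 : ∀ c : Fin (2 ^ s - 1) × Bool → ℝ,
      1 ≤ ⨆ i : Fin (2 ^ s), ∑ jt, |Tchan s i jt - c jt| := by
    intro c
    set S : Fin (2 ^ s) → ℝ := fun i => ∑ jt, |Tchan s i jt - c jt| with hS
    -- per-output-coordinate bound
    have stepA : ∀ jt : Fin (2 ^ s - 1) × Bool,
        (2 : ℝ) ^ s * r⁻¹ / 2 ≤ ∑ i : Fin (2 ^ s), |Tchan s i jt - c jt| := by
      intro jt
      set j : ℕ := jt.1.val + 1 with hj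
      have hjlt : j < 2 ^ s := by have := jt.1.isLt; omega
      obtain ⟨k, hbit⟩ := Nat.exists_testBit_of_ne_zero (x := j) (by omega)
      have hk : k < s := by
        by_contra hks
        have : j < 2 ^ k := lt_of_lt_of_le hjlt (Nat.pow_le_pow_right (by norm_num) (by omega))
        simp [Nat.testBit_lt_two_pow this] at hbit
      have hpk : 2 ^ k < 2 ^ s := Nat.pow_lt_pow_right one_lt_two hk
      set f : Fin (2 ^ s) → Fin (2 ^ s) :=
        fun i => ⟨i.val ^^^ 2 ^ k, Nat.xor_lt_two_pow i.isLt hpk⟩ with hf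
      have hinv : Function.Involutive f := by
        intro i
        simp only [hf]
        ext
        simp [Nat.xor_assoc]
      set e : Equiv.Perm (Fin (2 ^ s)) := hinv.toPerm f with he
      have hpt : ∀ i : Fin (2 ^ s),
          r⁻¹ ≤ |Tchan s i jt - c jt| + |Tchan s (f i) jt - c jt| := by
        intro i
        have hflip : binIP s ((f i) : Fin (2 ^ s)).val j = ! binIP s i.val j := by
          simpa [hf] using binIP_flip s i.val j k hk hbit
        have hdiff : |Tchan s i jt - Tchan s (f i) jt| = r⁻¹ := by
          simp only [Tchan, ← hj, hflip, ← hrdef]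
          cases hb : binIP s i.val j <;> cases ht : jt.2 <;>
            simp [hb, ht, abs_of_nonneg (le_of_lt (inv_pos.2 hr0)),
              abs_of_nonpos (neg_nonpos.2 (le_of_lt (inv_pos.2 hr0)))]
        calc r⁻¹ = |Tchan s i jt - Tchan s (f i) jt| := hdiff.symm
        _ ≤ |Tchan s i jt - c jt| + |c jt - Tchan s (f i) jt| := abs_sub_le _ _ _
        _ = |Tchan s i jt - c jt| + |Tchan s (f i) jt - c jt| := by rw [abs_sub_comm (c jt)]
      have hsum2 : ∑ i : Fin (2 ^ s),
          (|Tchan s i jt - c jt| + |Tchan s (f i) jt - c jt|)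
            = 2 * ∑ i : Fin (2 ^ s), |Tchan s i jt - c jt| := by
        rw [Finset.sum_add_distrib]
        have : ∑ i : Fin (2 ^ s), |Tchan s (f i) jt - c jt|
            = ∑ i : Fin (2 ^ s), |Tchan s i jt - c jt| :=
          Equiv.sum_comp e (fun i => |Tchan s i jt - c jt|)
        rw [this]; ring
      have hlb : (2 : ℝ) ^ s * r⁻¹ ≤ ∑ i : Fin (2 ^ s),
          (|Tchan s i jt - c jt| + |Tchan s (f i) jt - c jt|) := by
        calc (2 : ℝ) ^ s * r⁻¹ = ∑ _i : Fin (2 ^ s), r⁻¹ := by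
              rw [Finset.sum_const, Finset.card_univ, Fintype.card_fin]
              push_cast [Nat.cast_pow]
              ring
        _ ≤ _ := Finset.sum_le_sum fun i _ => hpt i
      rw [hsum2] at hlb
      linarith
    -- total bound
    have stepC : (2 : ℝ) ^ s ≤ ∑ i : Fin (2 ^ s), S i := by
      have hswap : ∑ i : Fin (2 ^ s), S i
          = ∑ jt : Fin (2 ^ s - 1) × Bool, ∑ i : Fin (2 ^ s), |Tchan s i jt - c jt| :=
        Finset.sum_comm
      rw [hswap]
      have hcard : (Fintype.card (Fin (2 ^ s - 1) × Bool) : ℝ) = 2 * r := by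
        rw [Fintype.card_prod, Fintype.card_fin, Fintype.card_bool]
        push_cast [Nat.cast_sub hM1]
        ring
      calc (2 : ℝ) ^ s = (Fintype.card (Fin (2 ^ s - 1) × Bool) : ℝ) * ((2:ℝ) ^ s * r⁻¹ / 2) := by
            rw [hcard]
            field_simp
      _ ≤ _ := by
            rw [← Finset.card_univ, ← nsmul_eq_mul, ← Finset.sum_const]
            exact Finset.sum_le_sum fun jt _ => stepA jt
    have hone : ∑ _i : Fin (2 ^ s), (1 : ℝ) ≤ ∑ i : Fin (2 ^ s), S i := by
      rw [Finset.sum_const, Finset.card_univ, Fintype.card_fin, nsmul_eq_mul, mul_one]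
      calc ((2 ^ s : ℕ) : ℝ) = (2 : ℝ) ^ s := by push_cast; ring
      _ ≤ _ := stepC
    obtain ⟨i, _, hi⟩ := Finset.exists_le_of_sum_le Finset.univ_nonempty hone
    exact le_trans hi (le_ciSup (Set.Finite.bddAbove (Set.finite_range S)) i)
  exact ⟨part1, le_ciInf part1⟩

end
end

section
/- Let X be a finite set, n ≥ 1, and let {ρ_0^x}_{x∈X} and {ρ_1^x}_{x∈X} be families of positive semidefinite n×n complex matrices satisfying Σ_{x∈X} ρ_0^x = Σ_{x∈X} ρ_1^x and Tr(Σ_{x∈X} ρ_0^x) = 1. Then there exist a positive integer m, a density operator Λ on ℂ^m ⊗ ℂ^n (positive semidefinite with trace 1), and POVMs {A_0^x}_{x∈X} and {A_1^x}_{x∈X} on ℂ^m (positive semidefinite matrices with Σ_{x∈X} A_a^x = I for each a ∈ {0,1}) such that ρ_a^x = Tr_A[ (A_a^x ⊗ I_n)·Λ ] for all a ∈ {0,1} and x ∈ X. -/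
open scoped Matrix Kronecker BigOperators Matrix.Norms.L2Operator ComplexOrder
open Matrix Finset

noncomputable section

namespace SteerAux

variable {n : ℕ} {σ : Matrix (Fin n) (Fin n) ℂ}

/-- Functional calculus of a Hermitian matrix. -/
def fc (hσ : σ.IsHermitian) (f : ℝ → ℝ) : Matrix (Fin n) (Fin n) ℂ :=
  (hσ.eigenvectorUnitary : Matrix (Fin n) (Fin n) ℂ) *
    Matrix.diagonal (fun i => (f (hσ.eigenvalues i) : ℂ)) *
    star (hσ.eigenvectorUnitary : Matrix (Fin n) (Fin n) ℂ)

lemma star_mul_self_unitary (hσ : σ.IsHermitian) :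
    star (hσ.eigenvectorUnitary : Matrix (Fin n) (Fin n) ℂ) *
      (hσ.eigenvectorUnitary : Matrix (Fin n) (Fin n) ℂ) = 1 :=
  (Unitary.mem_iff.mp hσ.eigenvectorUnitary.2).1

lemma mul_star_self_unitary (hσ : σ.IsHermitian) :
    (hσ.eigenvectorUnitary : Matrix (Fin n) (Fin n) ℂ) *
      star (hσ.eigenvectorUnitary : Matrix (Fin n) (Fin n) ℂ) = 1 :=
  (Unitary.mem_iff.mp hσ.eigenvectorUnitary.2).2

lemma fc_mul (hσ : σ.IsHermitian) (f g : ℝ → ℝ) :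
    fc hσ f * fc hσ g = fc hσ (fun t => f t * g t) := by
  unfold fc
  simp only [mul_assoc]
  rw [← mul_assoc (star (hσ.eigenvectorUnitary : Matrix (Fin n) (Fin n) ℂ)),
    star_mul_self_unitary hσ, one_mul, ← mul_assoc (Matrix.diagonal _), diagonal_mul_diagonal]
  norm_cast

lemma fc_congr (hσ : σ.IsHermitian) {f g : ℝ → ℝ}
    (h : ∀ i, f (hσ.eigenvalues i) = g (hσ.eigenvalues i)) : fc hσ f = fc hσ g := by
  unfold fc
  have : (fun i => ((f (hσ.eigenvalues i)) : ℂ)) = fun i => ((g (hσ.eigenvalues i)) : ℂ) :=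
    funext fun i => by rw [h i]
  rw [this]

lemma fc_id (hσ : σ.IsHermitian) : fc hσ (fun t => t) = σ := by
  conv_rhs => rw [hσ.spectral_theorem]
  rfl

lemma fc_one (hσ : σ.IsHermitian) : fc hσ (fun _ => 1) = 1 := by
  unfold fc
  simp [mul_star_self_unitary hσ]

lemma fc_add (hσ : σ.IsHermitian) (f g : ℝ → ℝ) :
    fc hσ (fun t => f t + g t) = fc hσ f + fc hσ g := by
  unfold fc
  rw [← add_mul, ← mul_add, diagonal_add]
  norm_cast

lemma fc_isHermitian (hσ : σ.IsHermitian) (f : ℝ → ℝ) : (fc hσ f).IsHermitian := by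
  unfold fc
  rw [IsHermitian, conjTranspose_mul, conjTranspose_mul, diagonal_conjTranspose]
  simp only [← star_eq_conjTranspose, star_star, Pi.star_def, Complex.star_def,
    Complex.conj_ofReal, mul_assoc]

lemma fc_posSemidef (hσ : σ.IsHermitian) {f : ℝ → ℝ}
    (hf : ∀ i, 0 ≤ f (hσ.eigenvalues i)) : (fc hσ f).PosSemidef := by
  unfold fc
  rw [star_eq_conjTranspose]
  refine (posSemidef_diagonal_iff.mpr fun i => ?_).mul_mul_conjTranspose_same _
  exact_mod_cast hf i

end SteerAux

/-- Any two families `{ρ_0^x}, {ρ_1^x}` of positive semidefinite operators on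
`ℂ^n` with `∑_x ρ_0^x = ∑_x ρ_1^x` and `Tr(∑_x ρ_0^x) = 1` can be realized as
`ρ_a^x = Tr_A[(A_a^x ⊗ I) Λ]` for some shared density operator `Λ` on
`ℂ^m ⊗ ℂ^n` and POVMs `{A_a^x}_x` on `ℂ^m`. -/
theorem steering_realization {X : Type*} [Fintype X] (n : ℕ)
    (ρ : Bool → X → Matrix (Fin n) (Fin n) ℂ)
    (hpsd : ∀ a x, (ρ a x).PosSemidef)
    (hsum : (∑ x, ρ false x) = ∑ x, ρ true x)
    (htr : (∑ x, ρ false x).trace = 1) :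
    ∃ m : ℕ, 0 < m ∧
      ∃ (Λ : Matrix (Fin m × Fin n) (Fin m × Fin n) ℂ)
        (A : Bool → X → Matrix (Fin m) (Fin m) ℂ),
        Λ.PosSemidef ∧ Λ.trace = 1 ∧
        (∀ a x, (A a x).PosSemidef) ∧ (∀ a, (∑ x, A a x) = 1) ∧
        ∀ a x i j, ρ a x i j =
          ∑ k, ((A a x ⊗ₖ (1 : Matrix (Fin n) (Fin n) ℂ)) * Λ) (k, i) (k, j) := by
  classical
  set σ : Matrix (Fin n) (Fin n) ℂ := ∑ x, ρ false x with hσdef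
  have hσsum : ∀ a : Bool, (∑ x, ρ a x) = σ := by
    intro a; cases a
    · rfl
    · exact hsum.symm
  have hpsdsum : ∀ (a : Bool) (s : Finset X), (∑ x ∈ s, ρ a x).PosSemidef := by
    intro a s
    refine Finset.sum_induction _ _ (fun A B hA hB => hA.add hB) ?_ (fun x _ => hpsd a x)
    exact ⟨Matrix.isHermitian_zero, fun v => by simp⟩
  have hσpsd : σ.PosSemidef := hpsdsum false univ
  have hH : σ.IsHermitian := hσpsd.1
  have hXne : Nonempty X := by
    by_contra h
    rw [not_nonempty_iff] at h
    rw [hσdef, Finset.univ_eq_empty, Finset.sum_empty, Matrix.trace_zero] at htr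
    exact one_ne_zero htr.symm
  have hn : 0 < n := by
    rcases Nat.eq_zero_or_pos n with h | h
    · exfalso
      subst h
      have h0 : σ.trace = 0 := by simp [Matrix.trace]
      rw [h0] at htr
      exact one_ne_zero htr.symm
    · exact h
  have heig : ∀ i, 0 ≤ hH.eigenvalues i := hσpsd.eigenvalues_nonneg
  set S := SteerAux.fc hH Real.sqrt with hSdef
  set T := SteerAux.fc hH (fun t => if t = 0 then 0 else (Real.sqrt t)⁻¹) with hTdef
  set P := SteerAux.fc hH (fun t => if t = 0 then 0 else 1) with hPdef
  have hS : S.IsHermitian := SteerAux.fc_isHermitian hH _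
  have hT : T.IsHermitian := SteerAux.fc_isHermitian hH _
  have hP : P.IsHermitian := SteerAux.fc_isHermitian hH _
  have hSS : S * S = σ := by
    rw [hSdef, SteerAux.fc_mul]
    exact (SteerAux.fc_congr hH fun i => Real.mul_self_sqrt (heig i)).trans
      (SteerAux.fc_id hH)
  have hST : S * T = P := by
    rw [hSdef, hTdef, hPdef, SteerAux.fc_mul]
    refine SteerAux.fc_congr hH fun i => ?_
    by_cases h : hH.eigenvalues i = 0
    · simp [h]
    · have hpos : 0 < hH.eigenvalues i := lt_of_le_of_ne (heig i) (Ne.symm h)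
      simp [h, mul_inv_cancel₀ (ne_of_gt (Real.sqrt_pos.mpr hpos))]
  have hTS : T * S = P := by
    rw [hSdef, hTdef, hPdef, SteerAux.fc_mul]
    refine SteerAux.fc_congr hH fun i => ?_
    by_cases h : hH.eigenvalues i = 0
    · simp [h]
    · have hpos : 0 < hH.eigenvalues i := lt_of_le_of_ne (heig i) (Ne.symm h)
      simp [h, inv_mul_cancel₀ (ne_of_gt (Real.sqrt_pos.mpr hpos))]
  have hSP : S * P = S := by
    rw [hSdef, hPdef, SteerAux.fc_mul]
    refine SteerAux.fc_congr hH fun i => ?_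
    by_cases h : hH.eigenvalues i = 0
    · simp [h]
    · simp [h]
  have hTσT : T * σ * T = P := by
    rw [← hSS, show T * (S * S) * T = (T * S) * (S * T) by simp only [mul_assoc], hTS, hST,
      hPdef, SteerAux.fc_mul]
    refine SteerAux.fc_congr hH fun i => ?_
    by_cases h : hH.eigenvalues i = 0 <;> simp [h]
  have hσQ : σ * ((1 : Matrix (Fin n) (Fin n) ℂ) - P) = 0 := by
    rw [mul_sub, mul_one, sub_eq_zero]
    conv_lhs => rw [← SteerAux.fc_id hH]
    conv_rhs => rw [← SteerAux.fc_id hH]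
    rw [hPdef, SteerAux.fc_mul]
    refine SteerAux.fc_congr hH fun i => ?_
    by_cases h : hH.eigenvalues i = 0 <;> simp [h]
  have hQpsd : ((1 : Matrix (Fin n) (Fin n) ℂ) - P).PosSemidef := by
    have h1 : (1 : Matrix (Fin n) (Fin n) ℂ) - P
        = SteerAux.fc hH (fun t => 1 - (if t = 0 then 0 else 1)) := by
      rw [sub_eq_iff_eq_add, hPdef, ← SteerAux.fc_add, ← SteerAux.fc_one hH]
      refine SteerAux.fc_congr hH fun i => ?_
      by_cases h : hH.eigenvalues i = 0 <;> simp [h]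
    rw [h1]
    refine SteerAux.fc_posSemidef hH fun i => ?_
    by_cases h : hH.eigenvalues i = 0 <;> simp [h]
  have hsupp : ∀ M : Matrix (Fin n) (Fin n) ℂ, M.PosSemidef → (σ - M).PosSemidef →
      M * ((1 : Matrix (Fin n) (Fin n) ℂ) - P) = 0 := by
    intro M hM hc
    have hvec : ∀ v : Fin n → ℂ,
        M *ᵥ (((1 : Matrix (Fin n) (Fin n) ℂ) - P) *ᵥ v) = 0 := by
      intro v
      set w : Fin n → ℂ := ((1 : Matrix (Fin n) (Fin n) ℂ) - P) *ᵥ v with hw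
      have hσw : σ *ᵥ w = 0 := by
        rw [hw, mulVec_mulVec, hσQ, zero_mulVec]
      have h0 : star w ⬝ᵥ M *ᵥ w + star w ⬝ᵥ (σ - M) *ᵥ w = 0 := by
        rw [← dotProduct_add, ← Matrix.add_mulVec]
        have he : M + (σ - M) = σ := by abel
        rw [he, hσw, dotProduct_zero]
      have h1 : star w ⬝ᵥ M *ᵥ w = 0 :=
        le_antisymm (by
          calc star w ⬝ᵥ M *ᵥ w ≤ star w ⬝ᵥ M *ᵥ w + star w ⬝ᵥ (σ - M) *ᵥ w :=
                le_add_of_nonneg_right (hc.dotProduct_mulVec_nonneg w)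
            _ = 0 := h0) (hM.dotProduct_mulVec_nonneg w)
      exact (hM.dotProduct_mulVec_zero_iff w).mp h1
    ext i j
    have h2 := congrFun (hvec (Pi.single j 1)) i
    rw [mulVec_mulVec] at h2
    simpa using h2
  have hsub : ∀ a x, (σ - ρ a x).PosSemidef := by
    intro a x
    have he : σ - ρ a x = ∑ x' ∈ univ.erase x, ρ a x' := by
      rw [← hσsum a, ← Finset.add_sum_erase _ _ (Finset.mem_univ x)]
      abel
    rw [he]
    exact hpsdsum a _
  have hPMP : ∀ a x, P * ρ a x * P = ρ a x := by
    intro a x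
    have h1 := hsupp (ρ a x) (hpsd a x) (hsub a x)
    rw [mul_sub, mul_one, sub_eq_zero] at h1
    have h2 : P * ρ a x = ρ a x := by
      have h3 := congrArg Matrix.conjTranspose h1
      rw [conjTranspose_mul, (hpsd a x).1.eq, hP.eq] at h3
      exact h3.symm
    rw [h2, ← h1]
  have hSsym : ∀ i k : Fin n, star (S i k) = S k i := by
    intro i k
    calc star (S i k) = Sᴴ k i := rfl
      _ = S k i := by rw [hS.eq]
  obtain ⟨x₀⟩ := hXne
  refine ⟨n, hn, Matrix.of (fun p q : Fin n × Fin n => S p.2 p.1 * star (S q.2 q.1)),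
    fun a x => (T * ρ a x * T +
      (if x = x₀ then (1 : Matrix (Fin n) (Fin n) ℂ) - P else 0))ᵀ,
    (posSemidef_iff_dotProduct_mulVec.mpr ⟨?_, ?_⟩), ?_, ?_, ?_, ?_⟩
  · -- Λ Hermitian
    ext p q
    simp only [conjTranspose_apply, Matrix.of_apply, star_mul', star_star]
    ring
  · -- Λ quadratic form nonneg
    intro v
    have hc : star v ⬝ᵥ
        (Matrix.of (fun p q : Fin n × Fin n => S p.2 p.1 * star (S q.2 q.1))) *ᵥ v
        = (∑ p : Fin n × Fin n, star (v p) * S p.2 p.1) *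
            star (∑ p : Fin n × Fin n, star (v p) * S p.2 p.1) := by
      simp only [dotProduct, mulVec, Matrix.of_apply, star_sum, star_mul', star_star, Pi.star_apply,
        Finset.mul_sum, Finset.sum_mul]
      rw [Finset.sum_comm]
      refine Finset.sum_congr rfl fun p _ => Finset.sum_congr rfl fun q _ => ?_
      ring
    rw [hc]
    exact mul_star_self_nonneg _
  · -- Λ trace
    have h1 : (Matrix.of (fun p q : Fin n × Fin n => S p.2 p.1 * star (S q.2 q.1))).trace
        = ∑ p : Fin n × Fin n, S p.2 p.1 * star (S p.2 p.1) := by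
      simp [Matrix.trace, Matrix.diag]
    rw [h1]
    calc ∑ p : Fin n × Fin n, S p.2 p.1 * star (S p.2 p.1)
        = ∑ k : Fin n, ∑ i : Fin n, S i k * S k i := by
          rw [Fintype.sum_prod_type]
          exact Finset.sum_congr rfl fun k _ => Finset.sum_congr rfl fun i _ => by
            rw [hSsym]
      _ = ∑ i : Fin n, ∑ k : Fin n, S i k * S k i := Finset.sum_comm
      _ = (S * S).trace := by simp [Matrix.trace, Matrix.diag, Matrix.mul_apply]
      _ = σ.trace := by rw [hSS]
      _ = 1 := htr
  · -- POVM elements psd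
    intro a x
    refine Matrix.PosSemidef.transpose (Matrix.PosSemidef.add ?_ ?_)
    · have h := (hpsd a x).mul_mul_conjTranspose_same T
      rwa [hT.eq] at h
    · by_cases h : x = x₀
      · rw [if_pos h]; exact hQpsd
      · rw [if_neg h]
        exact ⟨Matrix.isHermitian_zero, fun v => by simp⟩
  · -- POVM sums to identity
    intro a
    rw [← Matrix.transpose_sum]
    have h1 : (∑ x, (T * ρ a x * T +
        (if x = x₀ then (1 : Matrix (Fin n) (Fin n) ℂ) - P else 0))) = 1 := by
      rw [Finset.sum_add_distrib]
      have e1 : ∑ x, T * ρ a x * T = P := by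
        have e : ∑ x, T * ρ a x * T = T * (∑ x, ρ a x) * T := by
          rw [Finset.mul_sum, Finset.sum_mul]
        rw [e, hσsum a, hTσT]
      have e2 : (∑ x, if x = x₀ then (1 : Matrix (Fin n) (Fin n) ℂ) - P else 0)
          = 1 - P := by
        rw [Finset.sum_ite_eq' univ x₀]
        simp
      rw [e1, e2]
      abel
    rw [h1, Matrix.transpose_one]
  · -- the steering identity
    intro a x i j
    have hexp : ∀ N : Matrix (Fin n) (Fin n) ℂ,
        (∑ k, ((N ⊗ₖ (1 : Matrix (Fin n) (Fin n) ℂ)) *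
          Matrix.of (fun p q : Fin n × Fin n => S p.2 p.1 * star (S q.2 q.1))) (k, i) (k, j))
          = (S * Nᵀ * S) i j := by
      intro N
      have hterm : ∀ k, ((N ⊗ₖ (1 : Matrix (Fin n) (Fin n) ℂ)) *
          Matrix.of (fun p q : Fin n × Fin n => S p.2 p.1 * star (S q.2 q.1))) (k, i) (k, j)
          = ∑ l, N k l * (S i l * S k j) := by
        intro k
        rw [Matrix.mul_apply, Fintype.sum_prod_type]
        refine Finset.sum_congr rfl fun l _ => ?_
        simp only [kroneckerMap_apply, Matrix.of_apply, Matrix.one_apply, mul_ite, mul_one,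
          mul_zero, ite_mul, zero_mul]
        rw [Finset.sum_ite_eq univ i fun c => N k l * (S c l * star (S j k))]
        simp [hSsym]
      calc (∑ k, ((N ⊗ₖ (1 : Matrix (Fin n) (Fin n) ℂ)) *
            Matrix.of (fun p q : Fin n × Fin n => S p.2 p.1 * star (S q.2 q.1))) (k, i) (k, j))
          = ∑ k, ∑ l, N k l * (S i l * S k j) :=
            Finset.sum_congr rfl fun k _ => hterm k
        _ = (S * Nᵀ * S) i j := by
            rw [Matrix.mul_apply]
            refine Finset.sum_congr rfl fun k _ => ?_
            rw [Matrix.mul_apply, Finset.sum_mul]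
            refine Finset.sum_congr rfl fun l _ => ?_
            rw [Matrix.transpose_apply]
            ring
    rw [hexp, Matrix.transpose_transpose]
    have hfinal : S * (T * ρ a x * T +
        (if x = x₀ then (1 : Matrix (Fin n) (Fin n) ℂ) - P else 0)) * S = ρ a x := by
      rw [mul_add, add_mul]
      have e1 : S * (T * ρ a x * T) * S = ρ a x := by
        rw [show S * (T * ρ a x * T) * S = (S * T) * ρ a x * (T * S) by
          simp only [mul_assoc], hST, hTS]
        exact hPMP a x
      have e2 : S * (if x = x₀ then (1 : Matrix (Fin n) (Fin n) ℂ) - P else 0) * S = 0 := by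
        by_cases h : x = x₀
        · rw [if_pos h, mul_sub, mul_one, hSP, sub_self, zero_mul]
        · rw [if_neg h, mul_zero, zero_mul]
      rw [e1, e2, add_zero]
    rw [hfinal]

end
end
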